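/- arXiv:0807.3396 — 6 statements merged into one kernel-verified Lean document; each statement's English description precedes it below -/
import Mathlib

section
/- Let (N_1, …, N_k) be a multinomial random vector with parameters n and (p_1, …, p_k) (i.e., the counts in k cells of n independent trials with cell probabilities p_1, …, p_k summing to 1). Then for every ε > 0, P( Σ_{i=1}^k |N_i/n − p_i| ≥ ε ) ≤ 2^{k+1} e^{−n ε² / 2}. -/
open MeasureTheory ProbabilityTheory

open Real MeasureTheory ProbabilityTheory


/-- Hoeffding's lemma for a Bernoulli(q) variable:
`(1-q) e^{-qt} + q e^{(1-q)t} ≤ e^{t²/8}`. -/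
lemma bernoulli_mgf_le (q : ℝ) (h0 : 0 ≤ q) (h1 : q ≤ 1) (t : ℝ) :
    (1 - q) * exp (-q * t) + q * exp ((1 - q) * t) ≤ exp (t ^ 2 / 8) := by
  set d : ℝ → ℝ := fun t => 1 - q + q * exp t with hd
  have hdpos : ∀ t, 0 < d t := by
    intro t
    rcases lt_or_eq_of_le h0 with hq | hq
    · have : 0 < q * exp t := mul_pos hq (exp_pos t)
      have : 0 ≤ 1 - q := by linarith
      simp only [hd]; positivity
    · simp [hd, ← hq]
  set g : ℝ → ℝ := fun t => t ^ 2 / 8 + q * t - Real.log (d t) with hg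
  set g' : ℝ → ℝ := fun t => t / 4 + q - q * exp t / d t with hg'
  have hder : ∀ t, HasDerivAt g (g' t) t := by
    intro t
    have h1 : HasDerivAt d (q * exp t) t := by
      exact ((Real.hasDerivAt_exp t).const_mul q).const_add (1 - q)
    have h2 : HasDerivAt (fun t => Real.log (d t)) (q * exp t / d t) t :=
      h1.log (hdpos t).ne'
    have h3 : HasDerivAt (fun t : ℝ => t ^ 2 / 8 + q * t) (t / 4 + q) t := by
      have := ((hasDerivAt_pow 2 t).div_const 8).add ((hasDerivAt_id t).const_mul q)
      exact this.congr_deriv (by norm_num; ring)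
    exact h3.sub h2
  have hder' : ∀ t, HasDerivAt g' (1 / 4 - (q * exp t) * (1 - q) / (d t) ^ 2) t := by
    intro t
    have h1 : HasDerivAt d (q * exp t) t := by
      exact ((Real.hasDerivAt_exp t).const_mul q).const_add (1 - q)
    have h2 : HasDerivAt (fun t => q * exp t) (q * exp t) t :=
      (Real.hasDerivAt_exp t).const_mul q
    have h3 : HasDerivAt (fun t => q * exp t / d t)
        ((q * exp t * d t - q * exp t * (q * exp t)) / (d t) ^ 2) t :=
      h2.div h1 (hdpos t).ne'
    have h4 : HasDerivAt (fun t : ℝ => t / 4 + q) (1 / 4) t := by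
      simpa using ((hasDerivAt_id t).div_const 4).add_const q
    have h5 := h4.sub h3
    refine h5.congr_deriv ?_
    have : q * exp t * d t - q * exp t * (q * exp t) = q * exp t * (1 - q) := by
      simp only [hd]; ring
    rw [this]
  have hg'nonneg : ∀ t, 0 ≤ 1 / 4 - (q * exp t) * (1 - q) / (d t) ^ 2 := by
    have hdval : ∀ t, d t = 1 - q + q * exp t := fun _ => rfl
    clear_value d g g'
    clear hder hder' hd hg hg'
    intro t
    have hq1 : 0 ≤ 1 - q := by linarith
    have ha : 0 ≤ q * exp t := mul_nonneg h0 (exp_pos t).le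
    have key : 4 * ((q * exp t) * (1 - q)) ≤ (d t) ^ 2 := by
      have : (d t) ^ 2 - 4 * ((q * exp t) * (1 - q)) = (q * exp t - (1 - q)) ^ 2 := by
        rw [hdval]; ring
      nlinarith [sq_nonneg (q * exp t - (1 - q))]
    rw [sub_nonneg, div_le_iff₀ (pow_pos (hdpos t) 2)]
    linarith
  -- g' is monotone, g' 0 = 0
  have hg'mono : Monotone g' := by
    refine monotone_of_deriv_nonneg (fun t => (hder' t).differentiableAt) ?_
    intro t
    rw [(hder' t).deriv]
    exact hg'nonneg t
  have hg'0 : g' 0 = 0 := by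
    simp [hg', hd]
  have hg0 : g 0 = 0 := by simp [hg, hd]
  -- g ≥ 0 everywhere
  have hgnonneg : ∀ t, 0 ≤ g t := by
    intro t
    rcases le_total 0 t with ht | ht
    · have hmono : MonotoneOn g (Set.Ici (0:ℝ)) := by
        refine monotoneOn_of_deriv_nonneg (convex_Ici 0)
          (fun x _ => (hder x).differentiableAt.continuousAt.continuousWithinAt) ?_ ?_
        · intro x hx
          exact (hder x).differentiableAt.differentiableWithinAt
        · intro x hx
          rw [interior_Ici] at hx
          rw [(hder x).deriv]
          rw [← hg'0]
          exact hg'mono (le_of_lt hx)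
      have := hmono (Set.self_mem_Ici) (Set.mem_Ici.mpr ht) ht
      linarith [hg0 ▸ this]
    · have hanti : AntitoneOn g (Set.Iic (0:ℝ)) := by
        refine antitoneOn_of_deriv_nonpos (convex_Iic 0)
          (fun x _ => (hder x).differentiableAt.continuousAt.continuousWithinAt) ?_ ?_
        · intro x hx
          exact (hder x).differentiableAt.differentiableWithinAt
        · intro x hx
          rw [interior_Iic] at hx
          rw [(hder x).deriv]
          rw [← hg'0]
          exact hg'mono (le_of_lt hx)
      have := hanti (Set.mem_Iic.mpr ht) Set.self_mem_Iic ht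
      linarith [hg0 ▸ this]
  -- conclude
  have hlog : Real.log (d t) - q * t ≤ t ^ 2 / 8 := by
    have := hgnonneg t
    simp only [hg] at this
    linarith
  have h2 : Real.log (d t) ≤ t ^ 2 / 8 + q * t := by linarith
  have h3 : d t ≤ exp (t ^ 2 / 8 + q * t) :=
    (Real.log_le_iff_le_exp (hdpos t)).mp h2
  have hmain : d t * exp (-q * t) ≤ exp (t ^ 2 / 8) := by
    calc d t * exp (-q * t) ≤ exp (t ^ 2 / 8 + q * t) * exp (-q * t) := by
          gcongr
      _ = exp (t ^ 2 / 8) := by rw [← Real.exp_add]; ring_nf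
  have hexp : exp ((1 - q) * t) = exp t * exp (-q * t) := by
    rw [← Real.exp_add]; ring_nf
  calc (1 - q) * exp (-q * t) + q * exp ((1 - q) * t)
      = d t * exp (-q * t) := by simp only [hd]; rw [hexp]; ring
    _ ≤ exp (t ^ 2 / 8) := hmain

lemma hoeffding_tail {Ω : Type*} [MeasurableSpace Ω] (μ : Measure Ω)
    [IsProbabilityMeasure μ] (n : ℕ) (W : ℕ → Ω → ℝ)
    (hmeas : ∀ i, Measurable (W i))
    (hindep : iIndepFun W μ)
    (hint : ∀ i (t : ℝ), Integrable (fun ω => exp (t * W i ω)) μ)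
    (hmgf : ∀ i (t : ℝ), mgf (W i) μ t ≤ exp (t ^ 2 / 8)) (ε : ℝ) (hε : 0 < ε) :
    μ {ω | (n : ℝ) * ε / 2 ≤ (∑ i ∈ Finset.range n, W i) ω}
      ≤ ENNReal.ofReal (exp (-((n : ℝ) * ε ^ 2) / 2)) := by
  set t : ℝ := 2 * ε with ht
  have htpos : 0 ≤ t := by positivity
  have hS_int : Integrable (fun ω => exp (t * (∑ i ∈ Finset.range n, W i) ω)) μ :=
    hindep.integrable_exp_mul_sum hmeas (fun i _ => hint i t)
  have hcher := measure_ge_le_exp_mul_mgf ((n : ℝ) * ε / 2) htpos hS_int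
  have hmgfS : mgf (∑ i ∈ Finset.range n, W i) μ t ≤ exp ((n : ℝ) * t ^ 2 / 8) := by
    rw [hindep.mgf_sum hmeas]
    calc ∏ i ∈ Finset.range n, mgf (W i) μ t
        ≤ ∏ _i ∈ Finset.range n, exp (t ^ 2 / 8) :=
          Finset.prod_le_prod (fun i _ => mgf_nonneg) (fun i _ => hmgf i t)
      _ = exp ((n : ℝ) * t ^ 2 / 8) := by
          rw [Finset.prod_const, ← Real.exp_nat_mul, Finset.card_range]
          ring_nf
  have hbound : (μ {ω | (n : ℝ) * ε / 2 ≤ (∑ i ∈ Finset.range n, W i) ω}).toReal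
      ≤ exp (-((n : ℝ) * ε ^ 2) / 2) := by
    refine hcher.trans ?_
    calc exp (-t * ((n : ℝ) * ε / 2)) * mgf (∑ i ∈ Finset.range n, W i) μ t
        ≤ exp (-t * ((n : ℝ) * ε / 2)) * exp ((n : ℝ) * t ^ 2 / 8) := by
          gcongr
      _ = exp (-((n : ℝ) * ε ^ 2) / 2) := by
          rw [← Real.exp_add]
          congr 1
          rw [ht]; ring
  have hne : μ {ω | (n : ℝ) * ε / 2 ≤ (∑ i ∈ Finset.range n, W i) ω} ≠ ⊤ :=
    measure_ne_top μ _
  rw [← ENNReal.ofReal_toReal hne]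
  exact ENNReal.ofReal_le_ofReal hbound

lemma bernoulli_exp_eq {Ω : Type*} (S : Set Ω) (q t : ℝ) :
    (fun ω => exp (t * (S.indicator (fun _ => (1:ℝ)) ω - q)))
      = fun ω => S.indicator (fun _ => exp (t * (1 - q))) ω
          + Sᶜ.indicator (fun _ => exp (t * (0 - q))) ω := by
  funext ω
  by_cases h : ω ∈ S <;>
    simp [h, Set.indicator_of_mem, Set.indicator_of_notMem]

lemma bernoulli_integrable {Ω : Type*} [MeasurableSpace Ω] (μ : Measure Ω)
    [IsProbabilityMeasure μ] (S : Set Ω) (hS : MeasurableSet S) (q t : ℝ) :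
    Integrable (fun ω => exp (t * (S.indicator (fun _ => (1:ℝ)) ω - q))) μ := by
  rw [bernoulli_exp_eq]
  exact ((integrable_const _).indicator hS).add ((integrable_const _).indicator hS.compl)

lemma bernoulli_mgf_eq {Ω : Type*} [MeasurableSpace Ω] (μ : Measure Ω)
    [IsProbabilityMeasure μ] (S : Set Ω) (hS : MeasurableSet S) (q : ℝ)
    (hq0 : 0 ≤ q) (hq1 : q ≤ 1) (hqS : μ S = ENNReal.ofReal q) (t : ℝ) :
    ∫ ω, exp (t * (S.indicator (fun _ => (1:ℝ)) ω - q)) ∂μ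
      = (1 - q) * exp (-q * t) + q * exp ((1 - q) * t) := by
  have hSc : μ Sᶜ = 1 - ENNReal.ofReal q := by
    rw [measure_compl hS (measure_ne_top μ S), hqS, measure_univ]
  have htoS : (μ S).toReal = q := by rw [hqS, ENNReal.toReal_ofReal hq0]
  have htoSc : (μ Sᶜ).toReal = 1 - q := by
    rw [hSc, ENNReal.toReal_sub_of_le (ENNReal.ofReal_le_one.mpr hq1) ENNReal.one_ne_top,
      ENNReal.toReal_one, ENNReal.toReal_ofReal hq0]
  rw [bernoulli_exp_eq]
  rw [integral_add ((integrable_const _).indicator hS) ((integrable_const _).indicator hS.compl)]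
  rw [integral_indicator_const _ hS, integral_indicator_const _ hS.compl, measureReal_def, measureReal_def, htoS, htoSc]
  simp only [smul_eq_mul]
  ring_nf


/-- Multinomial deviation inequality: if `(N_1, …, N_k)` are the cell
counts of `n` i.i.d. trials with cell probabilities `p_1, …, p_k`, then
`P(Σ_j |N_j/n − p_j| ≥ ε) ≤ 2^{k+1} e^{−nε²/2}`. -/
theorem multinomial_L1_deviation_bound
    (k n : ℕ) (p : Fin k → ℝ)
    (hp : ∀ j, 0 ≤ p j) (hp1 : ∑ j, p j = 1)
    (Ω : Type*) [MeasurableSpace Ω] (μ : Measure Ω) [IsProbabilityMeasure μ]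
    (Z : ℕ → Ω → Fin k) (hZmeas : ∀ i, Measurable (Z i))
    (hZindep : iIndepFun Z μ)
    (hZdist : ∀ i : ℕ, ∀ j : Fin k, μ {ω | Z i ω = j} = ENNReal.ofReal (p j))
    (ε : ℝ) (hε : 0 < ε) :
    μ {ω | ε ≤ ∑ j : Fin k,
        |(((Finset.range n).filter (fun i => Z i ω = j)).card : ℝ) / (n : ℝ) - p j|}
      ≤ ENNReal.ofReal ((2 : ℝ) ^ (k + 1) * Real.exp (-((n : ℝ) * ε ^ 2) / 2)) := by
  classical
  by_cases hn : n = 0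
  · subst hn
    have h1 : (1 : ℝ) ≤ (2 : ℝ) ^ (k + 1) * Real.exp (-(((0:ℕ) : ℝ) * ε ^ 2) / 2) := by
      push_cast
      rw [show -((0:ℝ) * ε ^ 2) / 2 = 0 by ring, Real.exp_zero, mul_one]
      exact one_le_pow₀ one_le_two
    calc μ _ ≤ 1 := prob_le_one
      _ ≤ _ := by
        rw [← ENNReal.ofReal_one]
        exact ENNReal.ofReal_le_ofReal h1
  have hnpos : (0 : ℝ) < n := by
    exact_mod_cast Nat.pos_of_ne_zero hn
  -- abbreviations
  set N : Fin k → Ω → ℕ := fun j ω => ((Finset.range n).filter (fun i => Z i ω = j)).card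
    with hN
  set qA : Finset (Fin k) → ℝ := fun A => ∑ j ∈ A, p j with hqA
  have hq0 : ∀ A, 0 ≤ qA A := fun A => Finset.sum_nonneg fun j _ => hp j
  have hq1 : ∀ A, qA A ≤ 1 := by
    intro A
    rw [← hp1]
    exact Finset.sum_le_sum_of_subset_of_nonneg (Finset.subset_univ A) fun j _ _ => hp j
  set g : Finset (Fin k) → Fin k → ℝ :=
    fun A j => (↑A : Set (Fin k)).indicator (fun _ => (1:ℝ)) j - qA A with hg
  set W : Finset (Fin k) → ℕ → Ω → ℝ := fun A i => g A ∘ Z i with hW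
  have hgmeas : ∀ A, Measurable (g A) := fun A => measurable_from_top
  have hWmeas : ∀ A i, Measurable (W A i) := fun A i => (hgmeas A).comp (hZmeas i)
  have hWindep : ∀ A, iIndepFun (W A) μ :=
    fun A => hZindep.comp (fun _ => g A) (fun _ => hgmeas A)
  -- measure of the preimage set
  have hmeasA : ∀ (A : Finset (Fin k)) (i : ℕ), μ (Z i ⁻¹' (↑A : Set (Fin k))) = ENNReal.ofReal (qA A) := by
    intro A i
    have hset : Z i ⁻¹' (↑A : Set (Fin k)) = ⋃ j ∈ A, {ω | Z i ω = j} := by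
      ext ω; simp
    rw [hset, measure_biUnion_finset ?_ ?_]
    · rw [hqA]
      simp only
      rw [ENNReal.ofReal_sum_of_nonneg fun j _ => hp j]
      exact Finset.sum_congr rfl fun j _ => hZdist i j
    · intro j _ j' _ hjj'
      simp only [Function.onFun, Set.disjoint_left]
      intro ω h1 h2
      exact hjj' (h1.symm.trans h2)
    · intro j _
      exact (hZmeas i) (measurableSet_singleton j)
  -- mgf facts for W
  have hWrw : ∀ A i (t : ℝ), (fun ω => exp (t * W A i ω))
      = fun ω => exp (t * ((Z i ⁻¹' (↑A : Set (Fin k))).indicator (fun _ => (1:ℝ)) ω - qA A)) := by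
    intro A i t
    funext ω
    have hInd : (↑A : Set (Fin k)).indicator (fun _ => (1:ℝ)) (Z i ω)
        = (Z i ⁻¹' (↑A : Set (Fin k))).indicator (fun _ => (1:ℝ)) ω := by
      by_cases h : Z i ω ∈ A <;>
        simp [h, Set.indicator_of_mem, Set.indicator_of_notMem]
    simp only [hW, hg, Function.comp_apply, hInd]
  have hWint : ∀ A i (t : ℝ), Integrable (fun ω => exp (t * W A i ω)) μ := by
    intro A i t
    rw [hWrw A i t]
    exact bernoulli_integrable μ _ ((hZmeas i) (MeasurableSet.of_discrete)) _ t
  have hWmgf : ∀ A i (t : ℝ), mgf (W A i) μ t ≤ exp (t ^ 2 / 8) := by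
    intro A i t
    rw [mgf]
    rw [show ∫ ω, exp (t * W A i ω) ∂μ
        = ∫ ω, exp (t * ((Z i ⁻¹' (↑A : Set (Fin k))).indicator (fun _ => (1:ℝ)) ω - qA A)) ∂μ
      from congrArg _ (hWrw A i t)]
    rw [bernoulli_mgf_eq μ _ ((hZmeas i) (MeasurableSet.of_discrete)) (qA A) (hq0 A) (hq1 A)
      (hmeasA A i) t]
    exact bernoulli_mgf_le (qA A) (hq0 A) (hq1 A) t
  -- tail bound for each A
  have htail : ∀ A : Finset (Fin k),
      μ {ω | (n : ℝ) * ε / 2 ≤ (∑ i ∈ Finset.range n, W A i) ω}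
        ≤ ENNReal.ofReal (exp (-((n : ℝ) * ε ^ 2) / 2)) :=
    fun A => hoeffding_tail μ n (W A) (hWmeas A) (hWindep A) (hWint A) (hWmgf A) ε hε
  -- sum of counts over a subset
  have hcount : ∀ (ω : Ω) (A : Finset (Fin k)),
      (∑ i ∈ Finset.range n, W A i) ω = ∑ j ∈ A, ((N j ω : ℝ) - (n : ℝ) * p j) := by
    intro ω A
    rw [Finset.sum_apply]
    have hterm : ∀ i, W A i ω = (∑ j ∈ A, if Z i ω = j then (1:ℝ) else 0) - qA A := by
      intro i
      simp only [hW, hg, Function.comp_apply]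
      congr 1
      rw [Finset.sum_ite_eq A (Z i ω) (fun _ => (1:ℝ))]
      by_cases h : Z i ω ∈ A <;>
        simp [h, Set.indicator_of_mem, Set.indicator_of_notMem]
    calc ∑ i ∈ Finset.range n, W A i ω
        = ∑ i ∈ Finset.range n, ((∑ j ∈ A, if Z i ω = j then (1:ℝ) else 0) - qA A) :=
          Finset.sum_congr rfl fun i _ => hterm i
      _ = (∑ i ∈ Finset.range n, ∑ j ∈ A, if Z i ω = j then (1:ℝ) else 0) - (n : ℝ) * qA A := by
          rw [Finset.sum_sub_distrib, Finset.sum_const, Finset.card_range, nsmul_eq_mul]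
      _ = (∑ j ∈ A, ∑ i ∈ Finset.range n, if Z i ω = j then (1:ℝ) else 0) - (n : ℝ) * qA A := by
          rw [Finset.sum_comm]
      _ = (∑ j ∈ A, (N j ω : ℝ)) - (n : ℝ) * qA A := by
          congr 1
          refine Finset.sum_congr rfl fun j _ => ?_
          rw [Finset.sum_boole, hN]
      _ = ∑ j ∈ A, ((N j ω : ℝ) - (n : ℝ) * p j) := by
          rw [Finset.sum_sub_distrib, Finset.mul_sum]
  -- total count is n
  have htotal : ∀ ω : Ω, ∑ j : Fin k, (N j ω : ℝ) = (n : ℝ) := by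
    intro ω
    have := Finset.card_eq_sum_card_fiberwise
      (f := fun i => Z i ω) (s := Finset.range n) (t := Finset.univ)
      (fun i _ => Finset.mem_univ _)
    rw [Finset.card_range] at this
    exact_mod_cast congrArg (Nat.cast : ℕ → ℝ) this.symm
  -- inclusion into union of events
  have hincl : {ω | ε ≤ ∑ j : Fin k, |(N j ω : ℝ) / (n : ℝ) - p j|}
      ⊆ ⋃ A : Finset (Fin k), {ω | (n : ℝ) * ε / 2 ≤ (∑ i ∈ Finset.range n, W A i) ω} := by
    intro ω hω
    simp only [Set.mem_setOf_eq] at hω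
    set x : Fin k → ℝ := fun j => (N j ω : ℝ) / (n : ℝ) - p j with hx
    set A : Finset (Fin k) := Finset.univ.filter (fun j => 0 ≤ x j) with hA
    refine Set.mem_iUnion.mpr ⟨A, ?_⟩
    simp only [Set.mem_setOf_eq]
    have hsum0 : ∑ j, x j = 0 := by
      simp only [hx]
      rw [Finset.sum_sub_distrib, hp1, ← Finset.sum_div, htotal ω, div_self hnpos.ne']
      ring
    have habs : ∑ j, |x j| = ∑ j ∈ A, x j - ∑ j ∈ Finset.univ.filter (fun j => ¬ 0 ≤ x j), x j := by
      rw [← Finset.sum_filter_add_sum_filter_not Finset.univ (fun j => 0 ≤ x j)]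
      congr 1
      · exact Finset.sum_congr rfl fun j hj => abs_of_nonneg (Finset.mem_filter.mp hj).2
      · rw [← Finset.sum_neg_distrib]
        exact Finset.sum_congr rfl fun j hj =>
          abs_of_neg (not_le.mp (Finset.mem_filter.mp hj).2)
    have hsplit : ∑ j ∈ A, x j + ∑ j ∈ Finset.univ.filter (fun j => ¬ 0 ≤ x j), x j = 0 := by
      rw [Finset.sum_filter_add_sum_filter_not]
      exact hsum0
    have hA2 : ε / 2 ≤ ∑ j ∈ A, x j := by linarith
    rw [hcount ω A]
    have : ∑ j ∈ A, ((N j ω : ℝ) - (n : ℝ) * p j) = (n : ℝ) * ∑ j ∈ A, x j := by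
      rw [Finset.mul_sum]
      refine Finset.sum_congr rfl fun j _ => ?_
      simp only [hx]
      field_simp
    rw [this]
    calc (n : ℝ) * ε / 2 = (n : ℝ) * (ε / 2) := by ring
      _ ≤ (n : ℝ) * ∑ j ∈ A, x j := by
          exact mul_le_mul_of_nonneg_left hA2 hnpos.le
  -- union bound
  calc μ {ω | ε ≤ ∑ j : Fin k, |(N j ω : ℝ) / (n : ℝ) - p j|}
      ≤ μ (⋃ A : Finset (Fin k),
          {ω | (n : ℝ) * ε / 2 ≤ (∑ i ∈ Finset.range n, W A i) ω}) := measure_mono hincl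
    _ ≤ ∑' A : Finset (Fin k),
          μ {ω | (n : ℝ) * ε / 2 ≤ (∑ i ∈ Finset.range n, W A i) ω} := measure_iUnion_le _
    _ ≤ ∑' _A : Finset (Fin k), ENNReal.ofReal (exp (-((n : ℝ) * ε ^ 2) / 2)) :=
        ENNReal.tsum_le_tsum fun A => htail A
    _ = (2 ^ k : ℕ) * ENNReal.ofReal (exp (-((n : ℝ) * ε ^ 2) / 2)) := by
        rw [tsum_fintype, Finset.sum_const, Finset.card_univ, Fintype.card_finset,
          Fintype.card_fin, nsmul_eq_mul]
    _ ≤ ENNReal.ofReal ((2 : ℝ) ^ (k + 1) * exp (-((n : ℝ) * ε ^ 2) / 2)) := by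
        rw [show ((2 ^ k : ℕ) : ENNReal) = ENNReal.ofReal ((2 : ℝ) ^ k) by
          rw [ENNReal.ofReal_pow (by norm_num)]; norm_num]
        rw [← ENNReal.ofReal_mul (by positivity)]
        refine ENNReal.ofReal_le_ofReal ?_
        have : (2 : ℝ) ^ k ≤ 2 ^ (k + 1) := by
          exact pow_le_pow_right₀ one_le_two (Nat.le_succ k)
        nlinarith [Real.exp_pos (-((n : ℝ) * ε ^ 2) / 2)]
end

section
/- Let (f_x)_{x∈[a,b]} be a channel on [a,b] with continuity modulus ξ_Δ, let Λ : [a,b] × [a,b] → [0,∞) be a measurable loss function with Λ_max = sup Λ < ∞ and modulus λ(Δ), and let g : ℝ → [a,b] be measurable. Define A : [a,b] → ℝ by A(x) = ∫_ℝ Λ(x, g(y)) f_x(y) dy. Then for all x, x' ∈ [a,b] with |x − x'| ≤ Δ, |A(x) − A(x')| ≤ λ(Δ) + Λ_max·ξ_Δ + λ(Δ)·ξ_Δ. In particular, if ‖Λ‖_L < ∞ and ‖Ξ‖_L < ∞ then A is Lipschitz with Lipschitz constant at most ‖Λ‖_L + Λ_max·‖Ξ‖_L + (b−a)·‖Λ‖_L·‖Ξ‖_L,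 and A is bounded by Λ_max. -/
open MeasureTheory

/-- The continuity modulus of a channel:
`ξ_Δ = sup { ∫ |f_x − f_{x'}| : x, x' ∈ [a,b], |x − x'| ≤ Δ }`. -/
noncomputable def channelMod (a b : ℝ) (F : ℝ → ℝ → ℝ) (Δ : ℝ) : ℝ :=
  sSup {r : ℝ | ∃ x ∈ Set.Icc a b, ∃ x' ∈ Set.Icc a b, |x - x'| ≤ Δ ∧
    r = ∫ y : ℝ, |F x y - F x' y|}

/-- The modulus of continuity of a loss function in its first argument:
`λ(Δ) = sup { |Λ(x,x̂) − Λ(x',x̂)| : x̂, x, x' ∈ [a,b], |x − x'| ≤ Δ }`. -/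
noncomputable def lossMod (a b : ℝ) (Λ : ℝ → ℝ → ℝ) (Δ : ℝ) : ℝ :=
  sSup {r : ℝ | ∃ xhat ∈ Set.Icc a b, ∃ x ∈ Set.Icc a b, ∃ x' ∈ Set.Icc a b,
    |x - x'| ≤ Δ ∧ r = |Λ x xhat - Λ x' xhat|}

/-- The Lipschitz norm `sup_{0<Δ<b−a} mod(Δ)/Δ` of a modulus of continuity. -/
noncomputable def lipNormOfMod (a b : ℝ) (mod : ℝ → ℝ) : ℝ :=
  sSup {r : ℝ | ∃ Δ : ℝ, 0 < Δ ∧ Δ < b - a ∧ r = mod Δ / Δ}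

/-- The map `A(x) = ∫ Λ(x, g(y)) f_x(y) dy` inherits the moduli of
continuity of the loss and the channel: `|A(x) − A(x')| ≤ λ(Δ) + Λ_max ξ_Δ + λ(Δ) ξ_Δ`
whenever `|x − x'| ≤ Δ`; if moreover `‖Λ‖_L` and `‖Ξ‖_L` are finite, then `A` is
Lipschitz with constant at most `‖Λ‖_L + Λ_max ‖Ξ‖_L + (b−a) ‖Λ‖_L ‖Ξ‖_L` and bounded
by `Λ_max`. -/
theorem expected_loss_modulus_and_lipschitz
    (a b : ℝ) (hab : a < b)
    -- the channel
    (F : ℝ → ℝ → ℝ)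
    (hFmeas : Measurable (Function.uncurry F))
    (hFnn : ∀ x ∈ Set.Icc a b, ∀ y : ℝ, 0 ≤ F x y)
    (hFprob : ∀ x ∈ Set.Icc a b, ∫ y : ℝ, F x y = 1)
    -- the loss function and its supremum
    (Λ : ℝ → ℝ → ℝ) (hΛmeas : Measurable (Function.uncurry Λ))
    (hΛnn : ∀ x ∈ Set.Icc a b, ∀ x' ∈ Set.Icc a b, 0 ≤ Λ x x')
    (Λmax : ℝ)
    (hΛmax : IsLUB (Set.image2 Λ (Set.Icc a b) (Set.Icc a b)) Λmax)
    -- the denoising rule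
    (g : ℝ → ℝ) (hgmeas : Measurable g) (hgr : ∀ y : ℝ, g y ∈ Set.Icc a b)
    -- the expected-loss map
    (A : ℝ → ℝ) (hA : ∀ x : ℝ, A x = ∫ y : ℝ, Λ x (g y) * F x y) :
    (∀ Δ : ℝ, 0 < Δ → ∀ x ∈ Set.Icc a b, ∀ x' ∈ Set.Icc a b, |x - x'| ≤ Δ →
      |A x - A x'| ≤ lossMod a b Λ Δ + Λmax * channelMod a b F Δ
        + lossMod a b Λ Δ * channelMod a b F Δ) ∧
    (BddAbove {r : ℝ | ∃ Δ : ℝ, 0 < Δ ∧ Δ < b - a ∧ r = lossMod a b Λ Δ / Δ} →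
     BddAbove {r : ℝ | ∃ Δ : ℝ, 0 < Δ ∧ Δ < b - a ∧ r = channelMod a b F Δ / Δ} →
      (∀ x ∈ Set.Icc a b, ∀ x' ∈ Set.Icc a b,
        |A x - A x'| ≤ (lipNormOfMod a b (lossMod a b Λ)
          + Λmax * lipNormOfMod a b (channelMod a b F)
          + (b - a) * lipNormOfMod a b (lossMod a b Λ)
              * lipNormOfMod a b (channelMod a b F)) * |x - x'|) ∧
      (∀ x ∈ Set.Icc a b, |A x| ≤ Λmax)) := by
  have haI : a ∈ Set.Icc a b := ⟨le_refl a, le_of_lt hab⟩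
  -- measurability
  have hFxm : ∀ x : ℝ, Measurable (F x) := fun x =>
    hFmeas.comp measurable_prodMk_left
  have hΛgm : ∀ x : ℝ, Measurable (fun y => Λ x (g y)) := fun x =>
    hΛmeas.comp (measurable_const.prodMk hgmeas)
  -- integrability of the channel densities
  have hFint : ∀ x ∈ Set.Icc a b, Integrable (F x) := by
    intro x hx
    by_contra h
    have := hFprob x hx
    rw [integral_undef h] at this
    norm_num at this
  -- bounds on the loss
  have hΛle : ∀ x ∈ Set.Icc a b, ∀ xh ∈ Set.Icc a b, Λ x xh ≤ Λmax :=
    fun x hx xh hxh => hΛmax.1 ⟨x, hx, xh, hxh, rfl⟩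
  have hΛmax0 : 0 ≤ Λmax := (hΛnn a haI a haI).trans (hΛle a haI a haI)
  -- the lossMod set is bounded above by Λmax
  have hlossBdd : ∀ Δ : ℝ, BddAbove {r : ℝ | ∃ xhat ∈ Set.Icc a b, ∃ x ∈ Set.Icc a b,
      ∃ x' ∈ Set.Icc a b, |x - x'| ≤ Δ ∧ r = |Λ x xhat - Λ x' xhat|} := by
    intro Δ
    refine ⟨Λmax, ?_⟩
    rintro r ⟨xh, hxh, x, hx, x', hx', _, rfl⟩
    have h1 := hΛnn x hx xh hxh
    have h2 := hΛnn x' hx' xh hxh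
    have h3 := hΛle x hx xh hxh
    have h4 := hΛle x' hx' xh hxh
    rw [abs_sub_le_iff]
    constructor <;> linarith
  -- the channelMod set is bounded above by 2
  have hchanBdd : ∀ Δ : ℝ, BddAbove {r : ℝ | ∃ x ∈ Set.Icc a b, ∃ x' ∈ Set.Icc a b,
      |x - x'| ≤ Δ ∧ r = ∫ y : ℝ, |F x y - F x' y|} := by
    intro Δ
    refine ⟨2, ?_⟩
    rintro r ⟨x, hx, x', hx', _, rfl⟩
    have hint : Integrable (fun y => |F x y - F x' y|) :=
      ((hFint x hx).sub (hFint x' hx')).abs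
    have : ∫ y : ℝ, |F x y - F x' y| ≤ ∫ y : ℝ, (F x y + F x' y) := by
      refine integral_mono hint ((hFint x hx).add (hFint x' hx')) fun y => ?_
      calc |F x y - F x' y| ≤ |F x y| + |F x' y| := abs_sub _ _
        _ = F x y + F x' y := by
            rw [abs_of_nonneg (hFnn x hx y), abs_of_nonneg (hFnn x' hx' y)]
    rw [integral_add (hFint x hx) (hFint x' hx'), hFprob x hx, hFprob x' hx'] at this
    linarith
  -- elements are below the sups
  have hloss_mem : ∀ Δ : ℝ, ∀ x ∈ Set.Icc a b, ∀ x' ∈ Set.Icc a b, |x - x'| ≤ Δ →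
      ∀ xh ∈ Set.Icc a b, |Λ x xh - Λ x' xh| ≤ lossMod a b Λ Δ := by
    intro Δ x hx x' hx' hΔ xh hxh
    exact le_csSup (hlossBdd Δ) ⟨xh, hxh, x, hx, x', hx', hΔ, rfl⟩
  have hchan_mem : ∀ Δ : ℝ, ∀ x ∈ Set.Icc a b, ∀ x' ∈ Set.Icc a b, |x - x'| ≤ Δ →
      (∫ y : ℝ, |F x y - F x' y|) ≤ channelMod a b F Δ := by
    intro Δ x hx x' hx' hΔ
    exact le_csSup (hchanBdd Δ) ⟨x, hx, x', hx', hΔ, rfl⟩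
  -- nonnegativity of the moduli (for Δ ≥ 0)
  have hloss0 : ∀ Δ : ℝ, 0 ≤ Δ → 0 ≤ lossMod a b Λ Δ := by
    intro Δ hΔ
    have := hloss_mem Δ a haI a haI (by simpa using hΔ) a haI
    exact (abs_nonneg _).trans this
  have hchan0 : ∀ Δ : ℝ, 0 ≤ Δ → 0 ≤ channelMod a b F Δ := by
    intro Δ hΔ
    have := hchan_mem Δ a haI a haI (by simpa using hΔ)
    have h0 : (∫ y : ℝ, |F a y - F a y|) = 0 := by simp
    linarith
  -- integrability of the integrands
  have hint : ∀ x ∈ Set.Icc a b, ∀ x' ∈ Set.Icc a b,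
      Integrable (fun y => Λ x (g y) * F x' y) := by
    intro x hx x' hx'
    refine ((hFint x' hx').const_mul Λmax).mono'
      (((hΛgm x).mul (hFxm x')).aestronglyMeasurable) (ae_of_all _ fun y => ?_)
    have h1 := hΛnn x hx (g y) (hgr y)
    have h2 := hFnn x' hx' y
    rw [Real.norm_eq_abs, abs_of_nonneg (mul_nonneg h1 h2)]
    exact mul_le_mul_of_nonneg_right (hΛle x hx (g y) (hgr y)) h2
  -- the key estimate
  have key : ∀ Δ : ℝ, ∀ x ∈ Set.Icc a b, ∀ x' ∈ Set.Icc a b, |x - x'| ≤ Δ →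
      |A x - A x'| ≤ lossMod a b Λ Δ + Λmax * channelMod a b F Δ := by
    intro Δ x hx x' hx' hΔ
    have i1 := hint x hx x hx
    have i2 := hint x' hx' x hx
    have i3 := hint x' hx' x' hx'
    have split : A x - A x' =
        (∫ y : ℝ, (Λ x (g y) * F x y - Λ x' (g y) * F x y)) +
        ∫ y : ℝ, (Λ x' (g y) * F x y - Λ x' (g y) * F x' y) := by
      rw [hA x, hA x', integral_sub i1 i2, integral_sub i2 i3]
      ring
    have b1 : |∫ y : ℝ, (Λ x (g y) * F x y - Λ x' (g y) * F x y)| ≤ lossMod a b Λ Δ := by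
      refine le_trans (by simpa [Real.norm_eq_abs] using
        norm_integral_le_integral_norm (fun y => Λ x (g y) * F x y - Λ x' (g y) * F x y)) ?_
      have : ∫ y : ℝ, |Λ x (g y) * F x y - Λ x' (g y) * F x y| ≤
          ∫ y : ℝ, lossMod a b Λ Δ * F x y := by
        refine integral_mono (i1.sub i2).abs ((hFint x hx).const_mul _) fun y => ?_
        have : Λ x (g y) * F x y - Λ x' (g y) * F x y
            = (Λ x (g y) - Λ x' (g y)) * F x y := by ring
        rw [this, abs_mul, abs_of_nonneg (hFnn x hx y)]
        exact mul_le_mul_of_nonneg_right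
          (hloss_mem Δ x hx x' hx' hΔ (g y) (hgr y)) (hFnn x hx y)
      rwa [integral_const_mul, hFprob x hx, mul_one] at this
    have b2 : |∫ y : ℝ, (Λ x' (g y) * F x y - Λ x' (g y) * F x' y)| ≤
        Λmax * channelMod a b F Δ := by
      refine le_trans (by simpa [Real.norm_eq_abs] using
        norm_integral_le_integral_norm (fun y => Λ x' (g y) * F x y - Λ x' (g y) * F x' y)) ?_
      have h1 : ∫ y : ℝ, |Λ x' (g y) * F x y - Λ x' (g y) * F x' y| ≤
          ∫ y : ℝ, Λmax * |F x y - F x' y| := by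
        refine integral_mono (i2.sub i3).abs
          ((((hFint x hx).sub (hFint x' hx')).abs).const_mul _) fun y => ?_
        have : Λ x' (g y) * F x y - Λ x' (g y) * F x' y
            = Λ x' (g y) * (F x y - F x' y) := by ring
        rw [this, abs_mul, abs_of_nonneg (hΛnn x' hx' (g y) (hgr y))]
        exact mul_le_mul_of_nonneg_right (hΛle x' hx' (g y) (hgr y)) (abs_nonneg _)
      rw [integral_const_mul] at h1
      exact h1.trans (mul_le_mul_of_nonneg_left (hchan_mem Δ x hx x' hx' hΔ) hΛmax0)
    calc |A x - A x'| ≤ |∫ y : ℝ, (Λ x (g y) * F x y - Λ x' (g y) * F x y)| +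
          |∫ y : ℝ, (Λ x' (g y) * F x y - Λ x' (g y) * F x' y)| := by
          rw [split]; exact abs_add_le _ _
      _ ≤ lossMod a b Λ Δ + Λmax * channelMod a b F Δ := add_le_add b1 b2
  constructor
  · intro Δ hΔ x hx x' hx' hd
    have := key Δ x hx x' hx' hd
    have h1 := hloss0 Δ hΔ.le
    have h2 := hchan0 Δ hΔ.le
    nlinarith
  · intro hB1 hB2
    set L := lipNormOfMod a b (lossMod a b Λ) with hLdef
    set K := lipNormOfMod a b (channelMod a b F) with hKdef
    have hba : 0 < b - a := by linarith
    have hLmem : ∀ Δ : ℝ, 0 < Δ → Δ < b - a → lossMod a b Λ Δ ≤ L * Δ := by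
      intro Δ h1 h2
      have : lossMod a b Λ Δ / Δ ≤ L := le_csSup hB1 ⟨Δ, h1, h2, rfl⟩
      rw [div_le_iff₀ h1] at this
      linarith
    have hKmem : ∀ Δ : ℝ, 0 < Δ → Δ < b - a → channelMod a b F Δ ≤ K * Δ := by
      intro Δ h1 h2
      have : channelMod a b F Δ / Δ ≤ K := le_csSup hB2 ⟨Δ, h1, h2, rfl⟩
      rw [div_le_iff₀ h1] at this
      linarith
    have hL0 : 0 ≤ L := by
      have hmem : lossMod a b Λ ((b - a) / 2) / ((b - a) / 2) ≤ L :=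
        le_csSup hB1 ⟨(b - a) / 2, by linarith, by linarith, rfl⟩
      have := hloss0 ((b - a) / 2) (by linarith)
      have h0 : 0 ≤ lossMod a b Λ ((b - a) / 2) / ((b - a) / 2) :=
        div_nonneg this (by linarith)
      linarith
    have hK0 : 0 ≤ K := by
      have hmem : channelMod a b F ((b - a) / 2) / ((b - a) / 2) ≤ K :=
        le_csSup hB2 ⟨(b - a) / 2, by linarith, by linarith, rfl⟩
      have := hchan0 ((b - a) / 2) (by linarith)
      have h0 : 0 ≤ channelMod a b F ((b - a) / 2) / ((b - a) / 2) :=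
        div_nonneg this (by linarith)
      linarith
    constructor
    · intro x hx x' hx'
      rcases eq_or_ne x x' with rfl | hne
      · simp
      · set Δ := |x - x'| with hΔdef
        have hΔpos : 0 < Δ := abs_pos.mpr (sub_ne_zero.mpr hne)
        have hΔle : Δ ≤ b - a := by
          rw [hΔdef, abs_sub_le_iff]
          constructor <;> [linarith [hx.1, hx.2, hx'.1, hx'.2];
            linarith [hx.1, hx.2, hx'.1, hx'.2]]
        set m := (x + x') / 2 with hmdef
        have hm : m ∈ Set.Icc a b :=
          ⟨by rw [hmdef]; linarith [hx.1, hx'.1], by rw [hmdef]; linarith [hx.2, hx'.2]⟩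
        have hxm : |x - m| ≤ Δ / 2 := by
          have : x - m = (x - x') / 2 := by rw [hmdef]; ring
          rw [this, abs_div, hΔdef]
          simp [abs_of_pos (show (0:ℝ) < 2 by norm_num)]
        have hmx' : |m - x'| ≤ Δ / 2 := by
          have : m - x' = (x - x') / 2 := by rw [hmdef]; ring
          rw [this, abs_div, hΔdef]
          simp [abs_of_pos (show (0:ℝ) < 2 by norm_num)]
        have hhalf1 : 0 < Δ / 2 := by linarith
        have hhalf2 : Δ / 2 < b - a := by linarith
        have k1 := key (Δ / 2) x hx m hm hxm
        have k2 := key (Δ / 2) m hm x' hx' hmx'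
        have hL := hLmem (Δ / 2) hhalf1 hhalf2
        have hK := hKmem (Δ / 2) hhalf1 hhalf2
        have tri : |A x - A x'| ≤ |A x - A m| + |A m - A x'| := abs_sub_le _ _ _
        have step : |A x - A x'| ≤ (L + Λmax * K) * Δ := by
          have := mul_le_mul_of_nonneg_left hK hΛmax0
          nlinarith
        have slack : 0 ≤ (b - a) * L * K * Δ := by positivity
        calc |A x - A x'| ≤ (L + Λmax * K) * Δ := step
          _ ≤ (L + Λmax * K + (b - a) * L * K) * Δ := by nlinarith
    · intro x hx
      have hA0 : 0 ≤ A x := by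
        rw [hA x]
        exact integral_nonneg fun y =>
          mul_nonneg (hΛnn x hx (g y) (hgr y)) (hFnn x hx y)
      have hAle : A x ≤ Λmax := by
        rw [hA x]
        have : ∫ y : ℝ, Λ x (g y) * F x y ≤ ∫ y : ℝ, Λmax * F x y := by
          refine integral_mono (hint x hx x hx) ((hFint x hx).const_mul _) fun y => ?_
          exact mul_le_mul_of_nonneg_right (hΛle x hx (g y) (hgr y)) (hFnn x hx y)
        rwa [integral_const_mul, hFprob x hx, mul_one] at this
      rw [abs_of_nonneg hA0]
      exact hAle
end

section
/- Let (f_x)_{x∈[a,b]} be a channel on [a,b] with ‖Ξ‖_L < ∞, let Λ : [a,b] × [a,b] → [0,∞) be a measurable loss function with Λ_max = sup Λ < ∞ and ‖Λ‖_L < ∞, and let g : ℝ → [a,b] be measurable. Then for all Borel probability measures P, P̂ on [a,b], | ∫_{[a,b]} ∫_ℝ Λ(x, g(y)) f_x(y) dy dP(x) − ∫_{[a,b]} ∫_ℝ Λ(x, g(y)) f_x(y) dy dP̂(x) | ≤ ( ‖Λ‖_L + Λ_max·‖Ξ‖_L + (b−a)·‖Λ‖_L·‖Ξ‖_L + Λ_max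 ) · β(P, P̂). -/
open MeasureTheory

/-- The bounded-Lipschitz (Dudley) distance
`β(P,Q) = sup { |∫ f dP − ∫ f dQ| : Lip(f) + ‖f‖_∞ ≤ 1 }`. -/
noncomputable def betaDist {α : Type*} [MeasurableSpace α] [PseudoMetricSpace α]
    (P Q : Measure α) : ℝ :=
  sSup {r : ℝ | ∃ f : α → ℝ, ∃ C D : NNReal, LipschitzWith C f ∧ (∀ z, |f z| ≤ D) ∧
    (C : ℝ) + (D : ℝ) ≤ 1 ∧ r = |(∫ z, f z ∂P) - ∫ z, f z ∂Q|}

/-- Continuity of the expected loss in the input distribution: the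
expected losses under two input distributions `P, P̂` differ by at most
`(‖Λ‖_L + Λ_max‖Ξ‖_L + (b−a)‖Λ‖_L‖Ξ‖_L + Λ_max) β(P, P̂)`. -/
theorem expected_loss_beta_continuity
    (a b : ℝ) (hab : a < b)
    -- the channel
    (F : ℝ → ℝ → ℝ)
    (hFmeas : Measurable (Function.uncurry F))
    (hFnn : ∀ x ∈ Set.Icc a b, ∀ y : ℝ, 0 ≤ F x y)
    (hFprob : ∀ x ∈ Set.Icc a b, ∫ y : ℝ, F x y = 1)
    -- finiteness of the channel Lipschitz norm `‖Ξ‖_L`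
    (hXiFin : BddAbove {r : ℝ | ∃ Δ : ℝ, 0 < Δ ∧ Δ < b - a ∧ r = channelMod a b F Δ / Δ})
    -- the loss function, its supremum, and finiteness of its Lipschitz norm `‖Λ‖_L`
    (Λ : ℝ → ℝ → ℝ) (hΛmeas : Measurable (Function.uncurry Λ))
    (hΛnn : ∀ x ∈ Set.Icc a b, ∀ x' ∈ Set.Icc a b, 0 ≤ Λ x x')
    (Λmax : ℝ)
    (hΛmax : IsLUB (Set.image2 Λ (Set.Icc a b) (Set.Icc a b)) Λmax)
    (hΛFin : BddAbove {r : ℝ | ∃ Δ : ℝ, 0 < Δ ∧ Δ < b - a ∧ r = lossMod a b Λ Δ / Δ})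
    -- the denoising rule
    (g : ℝ → ℝ) (hgmeas : Measurable g) (hgr : ∀ y : ℝ, g y ∈ Set.Icc a b)
    -- the two input distributions
    (P Phat : Measure ℝ) [IsProbabilityMeasure P] [IsProbabilityMeasure Phat]
    (hPsupp : P (Set.Icc a b)ᶜ = 0) (hPhatsupp : Phat (Set.Icc a b)ᶜ = 0) :
    |(∫ x, (∫ y : ℝ, Λ x (g y) * F x y) ∂P)
        - ∫ x, (∫ y : ℝ, Λ x (g y) * F x y) ∂Phat|
      ≤ (lipNormOfMod a b (lossMod a b Λ)
          + Λmax * lipNormOfMod a b (channelMod a b F)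
          + (b - a) * lipNormOfMod a b (lossMod a b Λ)
              * lipNormOfMod a b (channelMod a b F)
          + Λmax) * betaDist P Phat := by
  classical
  have hab' : a ≤ b := hab.le
  have haI : a ∈ Set.Icc a b := ⟨le_refl a, hab'⟩
  set L := lipNormOfMod a b (lossMod a b Λ) with hLdef
  set X := lipNormOfMod a b (channelMod a b F) with hXdef
  -- measurability of slices
  have hFx : ∀ x : ℝ, Measurable (F x) := fun x =>
    hFmeas.comp measurable_prodMk_left
  have hΛg : ∀ x : ℝ, Measurable (fun y => Λ x (g y)) := fun x =>
    hΛmeas.comp (measurable_const.prodMk hgmeas)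
  have hFint : ∀ x ∈ Set.Icc a b, Integrable (F x) := by
    intro x hx
    by_contra h
    have h1 := hFprob x hx
    rw [integral_undef h] at h1
    norm_num at h1
  have hΛub : ∀ x ∈ Set.Icc a b, ∀ t ∈ Set.Icc a b, Λ x t ≤ Λmax := fun x hx t ht =>
    hΛmax.1 (Set.mem_image2_of_mem hx ht)
  have hΛmax0 : 0 ≤ Λmax := le_trans (hΛnn a haI a haI) (hΛub a haI a haI)
  -- boundedness of the modulus sets
  have hlossBdd : ∀ Δ : ℝ, BddAbove {r : ℝ | ∃ xhat ∈ Set.Icc a b, ∃ x ∈ Set.Icc a b,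
      ∃ x' ∈ Set.Icc a b, |x - x'| ≤ Δ ∧ r = |Λ x xhat - Λ x' xhat|} := by
    intro Δ
    refine ⟨Λmax, ?_⟩
    rintro r ⟨t, ht, x, hx, x', hx', -, rfl⟩
    have h1 := hΛub x hx t ht
    have h2 := hΛub x' hx' t ht
    have h3 := hΛnn x hx t ht
    have h4 := hΛnn x' hx' t ht
    rw [abs_le]
    constructor <;> linarith
  have hchanBdd : ∀ Δ : ℝ, BddAbove {r : ℝ | ∃ x ∈ Set.Icc a b, ∃ x' ∈ Set.Icc a b,
      |x - x'| ≤ Δ ∧ r = ∫ y : ℝ, |F x y - F x' y|} := by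
    intro Δ
    refine ⟨2, ?_⟩
    rintro r ⟨x, hx, x', hx', -, rfl⟩
    calc ∫ y : ℝ, |F x y - F x' y|
        ≤ ∫ y : ℝ, (F x y + F x' y) := by
          refine integral_mono (((hFint x hx).sub (hFint x' hx')).abs)
            ((hFint x hx).add (hFint x' hx')) (fun y => ?_)
          have h1 := hFnn x hx y
          have h2 := hFnn x' hx' y
          rw [abs_le]
          constructor <;> linarith
      _ = (∫ y : ℝ, F x y) + ∫ y : ℝ, F x' y :=
          integral_add (hFint x hx) (hFint x' hx')
      _ = 2 := by rw [hFprob x hx, hFprob x' hx']; norm_num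
  -- single-step modulus bounds
  have hlossStep : ∀ Δ : ℝ, 0 < Δ → Δ < b - a → ∀ x ∈ Set.Icc a b, ∀ x' ∈ Set.Icc a b,
      ∀ t ∈ Set.Icc a b, |x - x'| ≤ Δ → |Λ x t - Λ x' t| ≤ L * Δ := by
    intro Δ hΔ hΔ' x hx x' hx' t ht hxx
    have h1 : |Λ x t - Λ x' t| ≤ lossMod a b Λ Δ :=
      le_csSup (hlossBdd Δ) ⟨t, ht, x, hx, x', hx', hxx, rfl⟩
    have h2 : lossMod a b Λ Δ / Δ ≤ L := le_csSup hΛFin ⟨Δ, hΔ, hΔ', rfl⟩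
    have h3 : lossMod a b Λ Δ ≤ L * Δ := by
      rw [div_le_iff₀ hΔ] at h2
      exact h2
    linarith
  have hchanStep : ∀ Δ : ℝ, 0 < Δ → Δ < b - a → ∀ x ∈ Set.Icc a b, ∀ x' ∈ Set.Icc a b,
      |x - x'| ≤ Δ → (∫ y : ℝ, |F x y - F x' y|) ≤ X * Δ := by
    intro Δ hΔ hΔ' x hx x' hx' hxx
    have h1 : (∫ y : ℝ, |F x y - F x' y|) ≤ channelMod a b F Δ :=
      le_csSup (hchanBdd Δ) ⟨x, hx, x', hx', hxx, rfl⟩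
    have h2 : channelMod a b F Δ / Δ ≤ X := le_csSup hXiFin ⟨Δ, hΔ, hΔ', rfl⟩
    have h3 : channelMod a b F Δ ≤ X * Δ := by
      rw [div_le_iff₀ hΔ] at h2
      exact h2
    linarith
  -- nonnegativity of the Lipschitz norms
  set Δ₀ : ℝ := (b - a) / 2 with hΔ₀def
  have hΔ₀pos : 0 < Δ₀ := by simp only [hΔ₀def]; linarith
  have hΔ₀lt : Δ₀ < b - a := by simp only [hΔ₀def]; linarith
  have hL0 : 0 ≤ L := by
    have h1 : (0 : ℝ) ≤ lossMod a b Λ Δ₀ := by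
      have : |Λ a a - Λ a a| ≤ lossMod a b Λ Δ₀ :=
        le_csSup (hlossBdd Δ₀) ⟨a, haI, a, haI, a, haI, by simpa using hΔ₀pos.le, rfl⟩
      simpa using this
    have h2 : lossMod a b Λ Δ₀ / Δ₀ ≤ L := le_csSup hΛFin ⟨Δ₀, hΔ₀pos, hΔ₀lt, rfl⟩
    have h3 : (0 : ℝ) ≤ lossMod a b Λ Δ₀ / Δ₀ := div_nonneg h1 hΔ₀pos.le
    linarith
  have hX0 : 0 ≤ X := by
    have h1 : (0 : ℝ) ≤ channelMod a b F Δ₀ := by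
      have : (∫ y : ℝ, |F a y - F a y|) ≤ channelMod a b F Δ₀ :=
        le_csSup (hchanBdd Δ₀) ⟨a, haI, a, haI, by simpa using hΔ₀pos.le, rfl⟩
      simpa using this
    have h2 : channelMod a b F Δ₀ / Δ₀ ≤ X := le_csSup hXiFin ⟨Δ₀, hΔ₀pos, hΔ₀lt, rfl⟩
    have h3 : (0 : ℝ) ≤ channelMod a b F Δ₀ / Δ₀ := div_nonneg h1 hΔ₀pos.le
    linarith
  -- Lipschitz estimates via midpoints
  have hLipΛ : ∀ x ∈ Set.Icc a b, ∀ x' ∈ Set.Icc a b, ∀ t ∈ Set.Icc a b,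
      |Λ x t - Λ x' t| ≤ L * |x - x'| := by
    intro x hx x' hx' t ht
    rcases eq_or_ne x x' with rfl | hne
    · simp
    · have hΔpos : 0 < |x - x'| := abs_pos.mpr (sub_ne_zero.mpr hne)
      have hΔle : |x - x'| ≤ b - a := by
        rw [abs_le]
        constructor <;> [linarith [hx.1, hx.2, hx'.1, hx'.2]; linarith [hx.1, hx.2, hx'.1, hx'.2]]
      have h2 : |x - x'| / 2 < b - a := by linarith
      have hm : (x + x') / 2 ∈ Set.Icc a b :=
        ⟨by linarith [hx.1, hx'.1], by linarith [hx.2, hx'.2]⟩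
      have hxm : |x - (x + x') / 2| ≤ |x - x'| / 2 := by
        rw [show x - (x + x') / 2 = (x - x') / 2 by ring, abs_div, abs_two]
      have hmx : |(x + x') / 2 - x'| ≤ |x - x'| / 2 := by
        rw [show (x + x') / 2 - x' = (x - x') / 2 by ring, abs_div, abs_two]
      calc |Λ x t - Λ x' t|
          ≤ |Λ x t - Λ ((x + x') / 2) t| + |Λ ((x + x') / 2) t - Λ x' t| := abs_sub_le _ _ _
        _ ≤ L * (|x - x'| / 2) + L * (|x - x'| / 2) :=
            add_le_add
              (hlossStep (|x - x'| / 2) (by linarith) h2 x hx _ hm t ht hxm)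
              (hlossStep (|x - x'| / 2) (by linarith) h2 _ hm x' hx' t ht hmx)
        _ = L * |x - x'| := by ring
  have hLipF : ∀ x ∈ Set.Icc a b, ∀ x' ∈ Set.Icc a b,
      (∫ y : ℝ, |F x y - F x' y|) ≤ X * |x - x'| := by
    intro x hx x' hx'
    rcases eq_or_ne x x' with rfl | hne
    · simp
    · have hΔpos : 0 < |x - x'| := abs_pos.mpr (sub_ne_zero.mpr hne)
      have hΔle : |x - x'| ≤ b - a := by
        rw [abs_le]
        constructor <;> [linarith [hx.1, hx.2, hx'.1, hx'.2]; linarith [hx.1, hx.2, hx'.1, hx'.2]]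
      have h2 : |x - x'| / 2 < b - a := by linarith
      have hm : (x + x') / 2 ∈ Set.Icc a b :=
        ⟨by linarith [hx.1, hx'.1], by linarith [hx.2, hx'.2]⟩
      have hxm : |x - (x + x') / 2| ≤ |x - x'| / 2 := by
        rw [show x - (x + x') / 2 = (x - x') / 2 by ring, abs_div, abs_two]
      have hmx : |(x + x') / 2 - x'| ≤ |x - x'| / 2 := by
        rw [show (x + x') / 2 - x' = (x - x') / 2 by ring, abs_div, abs_two]
      have hIxm : Integrable (fun y => |F x y - F ((x + x') / 2) y|) :=
        ((hFint x hx).sub (hFint _ hm)).abs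
      have hImx : Integrable (fun y => |F ((x + x') / 2) y - F x' y|) :=
        ((hFint _ hm).sub (hFint x' hx')).abs
      calc (∫ y : ℝ, |F x y - F x' y|)
          ≤ ∫ y : ℝ, (|F x y - F ((x + x') / 2) y| + |F ((x + x') / 2) y - F x' y|) := by
            refine integral_mono (((hFint x hx).sub (hFint x' hx')).abs)
              (hIxm.add hImx) (fun y => abs_sub_le _ _ _)
        _ = (∫ y : ℝ, |F x y - F ((x + x') / 2) y|)
              + ∫ y : ℝ, |F ((x + x') / 2) y - F x' y| := integral_add hIxm hImx
        _ ≤ X * (|x - x'| / 2) + X * (|x - x'| / 2) :=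
            add_le_add
              (hchanStep (|x - x'| / 2) (by linarith) h2 x hx _ hm hxm)
              (hchanStep (|x - x'| / 2) (by linarith) h2 _ hm x' hx' hmx)
        _ = X * |x - x'| := by ring
  -- integrability of the loss integrand
  have hint : ∀ x ∈ Set.Icc a b, Integrable (fun y => Λ x (g y) * F x y) := by
    intro x hx
    refine (hFint x hx).bdd_mul (hΛg x).aestronglyMeasurable (c := Λmax) (ae_of_all _ fun y => ?_)
    rw [Real.norm_eq_abs, abs_of_nonneg (hΛnn x hx _ (hgr y))]
    exact hΛub x hx _ (hgr y)
  -- the expected loss function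
  set h : ℝ → ℝ := fun x => ∫ y : ℝ, Λ x (g y) * F x y with hhdef
  have hh0 : ∀ x ∈ Set.Icc a b, 0 ≤ h x := fun x hx =>
    integral_nonneg fun y => mul_nonneg (hΛnn x hx _ (hgr y)) (hFnn x hx y)
  have hhub : ∀ x ∈ Set.Icc a b, h x ≤ Λmax := by
    intro x hx
    calc h x ≤ ∫ y : ℝ, Λmax * F x y := by
          refine integral_mono (hint x hx) ((hFint x hx).const_mul Λmax) (fun y => ?_)
          exact mul_le_mul_of_nonneg_right (hΛub x hx _ (hgr y)) (hFnn x hx y)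
      _ = Λmax * ∫ y : ℝ, F x y := integral_const_mul Λmax _
      _ = Λmax := by rw [hFprob x hx, mul_one]
  have hC0nn : 0 ≤ L + Λmax * X := by positivity
  have hhLip : ∀ x ∈ Set.Icc a b, ∀ x' ∈ Set.Icc a b,
      |h x - h x'| ≤ (L + Λmax * X) * |x - x'| := by
    intro x hx x' hx'
    have hI1 := hint x hx
    have hI2 := hint x' hx'
    have hdiff : h x - h x' = ∫ y : ℝ, (Λ x (g y) * F x y - Λ x' (g y) * F x' y) :=
      (integral_sub hI1 hI2).symm
    rw [hdiff]
    have hbig : Integrable (fun y => L * |x - x'| * F x y + Λmax * |F x y - F x' y|) :=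
      ((hFint x hx).const_mul _).add ((((hFint x hx).sub (hFint x' hx')).abs).const_mul _)
    calc |∫ y : ℝ, (Λ x (g y) * F x y - Λ x' (g y) * F x' y)|
        ≤ ∫ y : ℝ, |Λ x (g y) * F x y - Λ x' (g y) * F x' y| := by
          simpa [Real.norm_eq_abs] using norm_integral_le_integral_norm
            (fun y : ℝ => Λ x (g y) * F x y - Λ x' (g y) * F x' y)
      _ ≤ ∫ y : ℝ, (L * |x - x'| * F x y + Λmax * |F x y - F x' y|) := by
          refine integral_mono ((hI1.sub hI2).abs) hbig (fun y => ?_)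
          have e : Λ x (g y) * F x y - Λ x' (g y) * F x' y
              = (Λ x (g y) - Λ x' (g y)) * F x y + Λ x' (g y) * (F x y - F x' y) := by ring
          rw [e]
          refine (abs_add_le _ _).trans (add_le_add ?_ ?_)
          · rw [abs_mul, abs_of_nonneg (hFnn x hx y)]
            exact mul_le_mul_of_nonneg_right
              (hLipΛ x hx x' hx' _ (hgr y)) (hFnn x hx y)
          · rw [abs_mul, abs_of_nonneg (hΛnn x' hx' _ (hgr y))]
            exact mul_le_mul_of_nonneg_right (hΛub x' hx' _ (hgr y)) (abs_nonneg _)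
      _ = L * |x - x'| * (∫ y : ℝ, F x y) + Λmax * ∫ y : ℝ, |F x y - F x' y| := by
          have hIa : Integrable (fun y : ℝ => L * |x - x'| * F x y) :=
            (hFint x hx).const_mul _
          have hIb : Integrable (fun y : ℝ => Λmax * |F x y - F x' y|) :=
            (((hFint x hx).sub (hFint x' hx')).abs).const_mul _
          rw [integral_add hIa hIb, integral_const_mul, integral_const_mul]
      _ ≤ L * |x - x'| * 1 + Λmax * (X * |x - x'|) :=
          add_le_add (by rw [hFprob x hx])
            (mul_le_mul_of_nonneg_left (hLipF x hx x' hx') hΛmax0)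
      _ = (L + Λmax * X) * |x - x'| := by ring
  -- the Lipschitz extension to all of ℝ
  have hproj : ∀ t : ℝ, max (min t b) a ∈ Set.Icc a b := fun t =>
    ⟨le_max_right _ _, max_le (min_le_right _ _) hab'⟩
  have hprojLip : LipschitzWith 1 (fun t : ℝ => max (min t b) a) :=
    (LipschitzWith.id.min_const b).max_const a
  have hprojId : ∀ x ∈ Set.Icc a b, max (min x b) a = x := fun x hx => by
    rw [min_eq_left hx.2, max_eq_left hx.1]
  set H : ℝ → ℝ := fun t => h (max (min t b) a) with hHdef
  have HLip : ∀ s t : ℝ, |H s - H t| ≤ (L + Λmax * X) * |s - t| := by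
    intro s t
    refine (hhLip _ (hproj s) _ (hproj t)).trans ?_
    refine mul_le_mul_of_nonneg_left ?_ hC0nn
    have := hprojLip.dist_le_mul s t
    simpa [Real.dist_eq] using this
  have Hbd : ∀ t : ℝ, |H t| ≤ Λmax := fun t =>
    abs_le.mpr ⟨by linarith [hh0 _ (hproj t)], hhub _ (hproj t)⟩
  -- the beta-distance set is bounded above
  have hβbdd : BddAbove {r : ℝ | ∃ f : ℝ → ℝ, ∃ C D : NNReal, LipschitzWith C f ∧
      (∀ z, |f z| ≤ D) ∧ (C : ℝ) + (D : ℝ) ≤ 1 ∧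
      r = |(∫ z, f z ∂P) - ∫ z, f z ∂Phat|} := by
    refine ⟨2, ?_⟩
    rintro r ⟨f, C, D, hfl, hfb, hCD, rfl⟩
    have hD1 : (D : ℝ) ≤ 1 := by have := C.coe_nonneg; linarith
    have key : ∀ (μ : Measure ℝ), IsProbabilityMeasure μ → |∫ z, f z ∂μ| ≤ 1 := by
      intro μ hμ
      have hfi : Integrable f μ := by
        refine Integrable.mono' (integrable_const (D : ℝ))
          hfl.continuous.aestronglyMeasurable (ae_of_all _ fun z => ?_)
        rw [Real.norm_eq_abs]
        exact hfb z
      calc |∫ z, f z ∂μ| ≤ ∫ z, |f z| ∂μ := by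
            simpa [Real.norm_eq_abs] using norm_integral_le_integral_norm f (μ := μ)
        _ ≤ ∫ _z, (D : ℝ) ∂μ := integral_mono hfi.abs (integrable_const _) hfb
        _ = (D : ℝ) := by simp
        _ ≤ 1 := hD1
    have h1 := key P inferInstance
    have h2 := key Phat inferInstance
    obtain ⟨h1a, h1b⟩ := abs_le.1 h1
    obtain ⟨h2a, h2b⟩ := abs_le.1 h2
    rw [abs_le]
    constructor <;> linarith
  have hβ0 : 0 ≤ betaDist P Phat := by
    have hmem : (0 : ℝ) ∈ {r : ℝ | ∃ f : ℝ → ℝ, ∃ C D : NNReal, LipschitzWith C f ∧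
        (∀ z, |f z| ≤ D) ∧ (C : ℝ) + (D : ℝ) ≤ 1 ∧
        r = |(∫ z, f z ∂P) - ∫ z, f z ∂Phat|} :=
      ⟨fun _ => (0 : ℝ), 0, 0, LipschitzWith.const 0, fun z => by simp, by norm_num,
        by simp⟩
    exact le_csSup hβbdd hmem
  -- supports
  have hPae : ∀ᵐ x ∂P, x ∈ Set.Icc a b := by
    rw [ae_iff]
    exact hPsupp
  have hPhatae : ∀ᵐ x ∂Phat, x ∈ Set.Icc a b := by
    rw [ae_iff]
    exact hPhatsupp
  have hHP : ∫ z, H z ∂P = ∫ x, h x ∂P := by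
    refine integral_congr_ae ?_
    filter_upwards [hPae] with x hx
    show h (max (min x b) a) = h x
    rw [hprojId x hx]
  have hHPhat : ∫ z, H z ∂Phat = ∫ x, h x ∂Phat := by
    refine integral_congr_ae ?_
    filter_upwards [hPhatae] with x hx
    show h (max (min x b) a) = h x
    rw [hprojId x hx]
  set K : ℝ := L + Λmax * X + (b - a) * L * X + Λmax with hKdef
  have hcross : 0 ≤ (b - a) * L * X :=
    mul_nonneg (mul_nonneg (by linarith) hL0) hX0
  have hKnn : 0 ≤ K := by
    simp only [hKdef]
    have := mul_nonneg hΛmax0 hX0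
    linarith
  rcases eq_or_lt_of_le hKnn with hK0 | hKpos
  · -- K = 0, so Λmax = 0 and the expected loss vanishes
    have hmx : Λmax = 0 := by
      have h1 : 0 ≤ Λmax * X := mul_nonneg hΛmax0 hX0
      simp only [hKdef] at hK0
      linarith
    have hzero : ∀ x ∈ Set.Icc a b, h x = 0 := fun x hx =>
      le_antisymm (by rw [← hmx]; exact hhub x hx) (hh0 x hx)
    have e1 : ∫ x, h x ∂P = 0 := by
      rw [integral_eq_zero_of_ae]
      filter_upwards [hPae] with x hx
      exact hzero x hx
    have e2 : ∫ x, h x ∂Phat = 0 := by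
      rw [integral_eq_zero_of_ae]
      filter_upwards [hPhatae] with x hx
      exact hzero x hx
    rw [e1, e2]
    simpa using mul_nonneg hKnn hβ0
  · -- K > 0: use f = H / K as a test function
    set f : ℝ → ℝ := fun t => H t / K with hfdef
    have hCcoe : ((Real.toNNReal ((L + Λmax * X) / K)) : ℝ) = (L + Λmax * X) / K :=
      Real.coe_toNNReal _ (div_nonneg hC0nn hKpos.le)
    have hDcoe : ((Real.toNNReal (Λmax / K)) : ℝ) = Λmax / K :=
      Real.coe_toNNReal _ (div_nonneg hΛmax0 hKpos.le)
    have hfLip : LipschitzWith (Real.toNNReal ((L + Λmax * X) / K)) f := by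
      refine LipschitzWith.of_dist_le_mul fun s t => ?_
      rw [hCcoe, Real.dist_eq, Real.dist_eq]
      show |H s / K - H t / K| ≤ (L + Λmax * X) / K * |s - t|
      rw [div_sub_div_same, abs_div, abs_of_pos hKpos, div_mul_eq_mul_div]
      exact div_le_div_of_nonneg_right (HLip s t) hKpos.le
    have hfbd : ∀ z, |f z| ≤ (Real.toNNReal (Λmax / K) : ℝ) := by
      intro z
      rw [hDcoe]
      show |H z / K| ≤ Λmax / K
      rw [abs_div, abs_of_pos hKpos]
      exact div_le_div_of_nonneg_right (Hbd z) hKpos.le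
    have hCD : ((Real.toNNReal ((L + Λmax * X) / K)) : ℝ)
        + ((Real.toNNReal (Λmax / K)) : ℝ) ≤ 1 := by
      rw [hCcoe, hDcoe, ← add_div]
      rw [div_le_one hKpos]
      simp only [hKdef]
      linarith
    have hmem : |(∫ z, f z ∂P) - ∫ z, f z ∂Phat| ∈ {r : ℝ | ∃ f : ℝ → ℝ,
        ∃ C D : NNReal, LipschitzWith C f ∧ (∀ z, |f z| ≤ D) ∧
        (C : ℝ) + (D : ℝ) ≤ 1 ∧ r = |(∫ z, f z ∂P) - ∫ z, f z ∂Phat|} :=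
      ⟨f, _, _, hfLip, hfbd, hCD, rfl⟩
    have hle : |(∫ z, f z ∂P) - ∫ z, f z ∂Phat| ≤ betaDist P Phat :=
      le_csSup hβbdd hmem
    have hfP : ∫ z, f z ∂P = (∫ x, h x ∂P) / K := by
      show (∫ z, H z / K ∂P) = (∫ x, h x ∂P) / K
      rw [integral_div, hHP]
    have hfPhat : ∫ z, f z ∂Phat = (∫ x, h x ∂Phat) / K := by
      show (∫ z, H z / K ∂Phat) = (∫ x, h x ∂Phat) / K
      rw [integral_div, hHPhat]
    have hfinal : |(∫ x, h x ∂P) - ∫ x, h x ∂Phat|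
        = K * |(∫ z, f z ∂P) - ∫ z, f z ∂Phat| := by
      rw [hfP, hfPhat, div_sub_div_same, abs_div, abs_of_pos hKpos,
        mul_div_cancel₀ _ hKpos.ne']
    rw [hfinal]
    exact mul_le_mul_of_nonneg_left hle hKpos.le
end

section
/- Let (f_x)_{x∈[a,b]} be a channel on [a,b] with continuity modulus ξ_Δ, let Λ : [a,b] × [a,b] → [0,∞) be a measurable loss function with Λ_max = sup Λ < ∞ and modulus λ(Δ), and let g : ℝ → [a,b] be measurable. Let Δ > 0, let P be a Borel probability measure on [a,b] and P^Δ its Δ-quantization. Then | ∫_{[a,b]} ∫_ℝ Λ(x, g(y)) f_x(y) dy dP^Δ(x) − ∫_{[a,b]} ∫_ℝ Λ(x, g(y)) f_x(y) dy dP(x) | ≤ ξ_Δ·Λ_max + λ(Δ)·(1 + ξ_Δ). -/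
open MeasureTheory

/-- The `Δ`-quantization of a Borel (probability) measure `P` on `[a,b]`: the discrete
measure putting mass `P({a})` at `a = a₀`, mass `P((a_{i−1}, a_i])` at `a_i = a + iΔ` for
`i = 1, …, ⌊(b−a)/Δ⌋`, and the mass of the remaining final cell at `b`. -/
noncomputable def quantMeasure (P : Measure ℝ) (a b Δ : ℝ) : Measure ℝ :=
  P {a} • Measure.dirac a
    + ∑ i ∈ Finset.range (Nat.floor ((b - a) / Δ)),
        P (Set.Ioc (a + (i : ℝ) * Δ) (a + ((i : ℝ) + 1) * Δ)) •
          Measure.dirac (a + ((i : ℝ) + 1) * Δ)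
    + P (Set.Ioc (a + (Nat.floor ((b - a) / Δ) : ℝ) * Δ) b) • Measure.dirac b

/-- Quantization continuity of the expected loss: the expected loss
under the `Δ`-quantization `P^Δ` of an input distribution `P` differs from the expected
loss under `P` by at most `ξ_Δ Λ_max + λ(Δ)(1 + ξ_Δ)`. -/
theorem expected_loss_quantization_bound
    (a b : ℝ) (hab : a < b)
    -- the channel
    (F : ℝ → ℝ → ℝ)
    (hFmeas : Measurable (Function.uncurry F))
    (hFnn : ∀ x ∈ Set.Icc a b, ∀ y : ℝ, 0 ≤ F x y)
    (hFprob : ∀ x ∈ Set.Icc a b, ∫ y : ℝ, F x y = 1)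
    -- the loss function and its supremum
    (Λ : ℝ → ℝ → ℝ) (hΛmeas : Measurable (Function.uncurry Λ))
    (hΛnn : ∀ x ∈ Set.Icc a b, ∀ x' ∈ Set.Icc a b, 0 ≤ Λ x x')
    (Λmax : ℝ)
    (hΛmax : IsLUB (Set.image2 Λ (Set.Icc a b) (Set.Icc a b)) Λmax)
    -- the denoising rule
    (g : ℝ → ℝ) (hgmeas : Measurable g) (hgr : ∀ y : ℝ, g y ∈ Set.Icc a b)
    -- the quantization resolution and the input distribution
    (Δ : ℝ) (hΔ : 0 < Δ)
    (P : Measure ℝ) [IsProbabilityMeasure P] (hPsupp : P (Set.Icc a b)ᶜ = 0) :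
    |(∫ x, (∫ y : ℝ, Λ x (g y) * F x y) ∂(quantMeasure P a b Δ))
        - ∫ x, (∫ y : ℝ, Λ x (g y) * F x y) ∂P|
      ≤ channelMod a b F Δ * Λmax
        + lossMod a b Λ Δ * (1 + channelMod a b F Δ) := by
    -- Notation
  have ha : a ∈ Set.Icc a b := Set.left_mem_Icc.2 hab.le
  have hb : b ∈ Set.Icc a b := Set.right_mem_Icc.2 hab.le
  set N := Nat.floor ((b - a) / Δ) with hN
  set A : ℕ → ℝ := fun i => a + (i : ℝ) * Δ with hA
  set H : ℝ → ℝ := fun x => ∫ y : ℝ, Λ x (g y) * F x y with hH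
  set ξ := channelMod a b F Δ with hξdef
  set lam := lossMod a b Λ Δ with hlamdef
  set B := lam + Λmax * ξ with hB
  -- basic facts about A
  have hA0 : A 0 = a := by simp [hA]
  have hAmono : ∀ i j : ℕ, i ≤ j → A i ≤ A j := by
    intro i j hij
    simp only [hA, add_le_add_iff_left]
    have : (i : ℝ) ≤ j := Nat.cast_le.2 hij
    nlinarith
  have hAa : ∀ i : ℕ, a ≤ A i := fun i => hA0 ▸ hAmono 0 i (Nat.zero_le i)
  have hANb : A N ≤ b := by
    have h1 : (N : ℝ) ≤ (b - a) / Δ := Nat.floor_le (div_nonneg (by linarith) hΔ.le)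
    have := (le_div_iff₀ hΔ).1 h1
    simp only [hA]; linarith
  have hbAN : b - A N ≤ Δ := by
    have h1 : (b - a) / Δ < (N : ℝ) + 1 := Nat.lt_floor_add_one _
    have := (div_lt_iff₀ hΔ).1 h1
    simp only [hA]; nlinarith
  have hAmem : ∀ i : ℕ, i ≤ N → A i ∈ Set.Icc a b :=
    fun i hi => ⟨hAa i, le_trans (hAmono i N hi) hANb⟩
  -- measurability of slices
  have hFxmeas : ∀ x : ℝ, Measurable (F x) := fun x => hFmeas.of_uncurry_left
  have hΛxmeas : ∀ x : ℝ, Measurable (Λ x) := fun x => hΛmeas.of_uncurry_left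
  -- Λmax facts
  have hΛub : ∀ x ∈ Set.Icc a b, ∀ x' ∈ Set.Icc a b, Λ x x' ≤ Λmax :=
    fun x hx x' hx' => hΛmax.1 (Set.mem_image2_of_mem hx hx')
  have hΛmax0 : 0 ≤ Λmax := le_trans (hΛnn a ha a ha) (hΛub a ha a ha)
  -- integrability of F x
  have hFint : ∀ x ∈ Set.Icc a b, Integrable (F x) := by
    intro x hx
    by_contra h
    have := hFprob x hx
    rw [integral_undef h] at this
    norm_num at this
  -- integrability of products
  have hint : ∀ x ∈ Set.Icc a b, ∀ x' ∈ Set.Icc a b,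
      Integrable (fun y => Λ x (g y) * F x' y) := by
    intro x hx x' hx'
    have hm : Measurable fun y => Λ x (g y) * F x' y :=
      ((hΛxmeas x).comp hgmeas).mul (hFxmeas x')
    refine ((hFint x' hx').const_mul Λmax).mono hm.aestronglyMeasurable
      (Filter.Eventually.of_forall fun y => ?_)
    have h1 : 0 ≤ Λ x (g y) := hΛnn x hx (g y) (hgr y)
    have h2 : Λ x (g y) ≤ Λmax := hΛub x hx (g y) (hgr y)
    have h3 : 0 ≤ F x' y := hFnn x' hx' y
    simp only [Real.norm_eq_abs, abs_mul]
    rw [abs_of_nonneg h1, abs_of_nonneg h3, abs_of_nonneg hΛmax0]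
    exact mul_le_mul_of_nonneg_right h2 h3
  -- channelMod facts
  have hξbdd : BddAbove {r : ℝ | ∃ x ∈ Set.Icc a b, ∃ x' ∈ Set.Icc a b, |x - x'| ≤ Δ ∧
      r = ∫ y : ℝ, |F x y - F x' y|} := by
    refine ⟨2, ?_⟩
    rintro r ⟨x, hx, x', hx', -, rfl⟩
    have h1 : ∫ y : ℝ, |F x y - F x' y| ≤ ∫ y : ℝ, (F x y + F x' y) := by
      refine integral_mono ((hFint x hx).sub (hFint x' hx')).abs
        ((hFint x hx).add (hFint x' hx')) fun y => ?_
      have := hFnn x hx y; have := hFnn x' hx' y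
      rw [abs_le]; constructor <;> linarith
    rw [integral_add (hFint x hx) (hFint x' hx'), hFprob x hx, hFprob x' hx'] at h1
    linarith
  have hξle : ∀ x ∈ Set.Icc a b, ∀ x' ∈ Set.Icc a b, |x - x'| ≤ Δ →
      (∫ y : ℝ, |F x y - F x' y|) ≤ ξ :=
    fun x hx x' hx' h => le_csSup hξbdd ⟨x, hx, x', hx', h, rfl⟩
  have hξ0 : 0 ≤ ξ := by
    refine le_csSup hξbdd ⟨a, ha, a, ha, by simpa using hΔ.le, ?_⟩
    simp
  -- lossMod facts
  have hlbdd : BddAbove {r : ℝ | ∃ xhat ∈ Set.Icc a b, ∃ x ∈ Set.Icc a b, ∃ x' ∈ Set.Icc a b,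
      |x - x'| ≤ Δ ∧ r = |Λ x xhat - Λ x' xhat|} := by
    refine ⟨Λmax, ?_⟩
    rintro r ⟨xh, hxh, x, hx, x', hx', -, rfl⟩
    have := hΛnn x hx xh hxh; have := hΛnn x' hx' xh hxh
    have := hΛub x hx xh hxh; have := hΛub x' hx' xh hxh
    rw [abs_le]; constructor <;> linarith
  have hlam_le : ∀ xh ∈ Set.Icc a b, ∀ x ∈ Set.Icc a b, ∀ x' ∈ Set.Icc a b, |x - x'| ≤ Δ →
      |Λ x xh - Λ x' xh| ≤ lam :=
    fun xh hxh x hx x' hx' h => le_csSup hlbdd ⟨xh, hxh, x, hx, x', hx', h, rfl⟩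
  have hlam0 : 0 ≤ lam := by
    refine le_csSup hlbdd ⟨a, ha, a, ha, a, ha, by simpa using hΔ.le, ?_⟩
    simp
  -- the key continuity estimate for H
  have hHdiff : ∀ p ∈ Set.Icc a b, ∀ x ∈ Set.Icc a b, |p - x| ≤ Δ → |H p - H x| ≤ B := by
    intro p hp x hx hpx
    have i1 : Integrable (fun y => Λ p (g y) * F p y) := hint p hp p hp
    have i2 : Integrable (fun y => Λ x (g y) * F p y) := hint x hx p hp
    have i3 : Integrable (fun y => Λ x (g y) * F x y) := hint x hx x hx
    have e1 : ∫ y : ℝ, (Λ p (g y) - Λ x (g y)) * F p y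
        = (∫ y : ℝ, Λ p (g y) * F p y) - ∫ y : ℝ, Λ x (g y) * F p y := by
      simp_rw [sub_mul]; exact integral_sub i1 i2
    have e2 : ∫ y : ℝ, Λ x (g y) * (F p y - F x y)
        = (∫ y : ℝ, Λ x (g y) * F p y) - ∫ y : ℝ, Λ x (g y) * F x y := by
      simp_rw [mul_sub]; exact integral_sub i2 i3
    have e : H p - H x = (∫ y : ℝ, (Λ p (g y) - Λ x (g y)) * F p y)
        + ∫ y : ℝ, Λ x (g y) * (F p y - F x y) := by
      simp only [hH]; rw [e1, e2]; ring
    have b1 : |∫ y : ℝ, (Λ p (g y) - Λ x (g y)) * F p y| ≤ lam := by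
      have habs : |∫ y : ℝ, (Λ p (g y) - Λ x (g y)) * F p y|
          ≤ ∫ y : ℝ, |(Λ p (g y) - Λ x (g y)) * F p y| := by
        simpa only [Real.norm_eq_abs] using
          norm_integral_le_integral_norm (μ := volume) (fun y => (Λ p (g y) - Λ x (g y)) * F p y)
      have iabs : Integrable (fun y => |(Λ p (g y) - Λ x (g y)) * F p y|) := by
        have := (i1.sub i2).abs
        simpa [sub_mul] using this
      have hmono : ∫ y : ℝ, |(Λ p (g y) - Λ x (g y)) * F p y| ≤ ∫ y : ℝ, lam * F p y := by
        refine integral_mono iabs ((hFint p hp).const_mul lam) fun y => ?_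
        rw [abs_mul, abs_of_nonneg (hFnn p hp y)]
        exact mul_le_mul_of_nonneg_right
          (hlam_le (g y) (hgr y) p hp x hx hpx) (hFnn p hp y)
      rw [integral_const_mul, hFprob p hp, mul_one] at hmono
      linarith
    have b2 : |∫ y : ℝ, Λ x (g y) * (F p y - F x y)| ≤ Λmax * ξ := by
      have habs : |∫ y : ℝ, Λ x (g y) * (F p y - F x y)|
          ≤ ∫ y : ℝ, |Λ x (g y) * (F p y - F x y)| := by
        simpa only [Real.norm_eq_abs] using
          norm_integral_le_integral_norm (μ := volume) (fun y => Λ x (g y) * (F p y - F x y))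
      have iabs : Integrable (fun y => |Λ x (g y) * (F p y - F x y)|) := by
        have := (i2.sub i3).abs
        simpa [mul_sub] using this
      have hmono : ∫ y : ℝ, |Λ x (g y) * (F p y - F x y)|
          ≤ ∫ y : ℝ, Λmax * |F p y - F x y| := by
        refine integral_mono iabs (((hFint p hp).sub (hFint x hx)).abs.const_mul Λmax)
          fun y => ?_
        rw [abs_mul]
        refine mul_le_mul_of_nonneg_right ?_ (abs_nonneg _)
        rw [abs_of_nonneg (hΛnn x hx (g y) (hgr y))]
        exact hΛub x hx (g y) (hgr y)
      rw [integral_const_mul] at hmono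
      have := mul_le_mul_of_nonneg_left (hξle p hp x hx hpx) hΛmax0
      linarith
    calc |H p - H x| = |(∫ y : ℝ, (Λ p (g y) - Λ x (g y)) * F p y)
        + ∫ y : ℝ, Λ x (g y) * (F p y - F x y)| := by rw [e]
      _ ≤ _ := abs_add_le _ _
      _ ≤ lam + Λmax * ξ := add_le_add b1 b2
  -- measurability and boundedness of H
  have hHsm : StronglyMeasurable H := by
    have hm : Measurable (Function.uncurry fun x y => Λ x (g y) * F x y) :=
      (hΛmeas.comp (measurable_fst.prodMk (hgmeas.comp measurable_snd))).mul hFmeas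
    exact hm.stronglyMeasurable.integral_prod_right
  have hHle : ∀ x ∈ Set.Icc a b, |H x| ≤ Λmax := by
    intro x hx
    have habs : |H x| ≤ ∫ y : ℝ, |Λ x (g y) * F x y| := by
      simpa only [Real.norm_eq_abs, hH] using
        norm_integral_le_integral_norm (μ := volume) (fun y => Λ x (g y) * F x y)
    have hmono : ∫ y : ℝ, |Λ x (g y) * F x y| ≤ ∫ y : ℝ, Λmax * F x y := by
      refine integral_mono (hint x hx x hx).abs ((hFint x hx).const_mul Λmax) fun y => ?_
      rw [abs_mul, abs_of_nonneg (hFnn x hx y), abs_of_nonneg (hΛnn x hx (g y) (hgr y))]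
      exact mul_le_mul_of_nonneg_right (hΛub x hx (g y) (hgr y)) (hFnn x hx y)
    rw [integral_const_mul, hFprob x hx, mul_one] at hmono
    linarith
  have hae : ∀ᵐ x ∂P, x ∈ Set.Icc a b := by
    exact ae_iff.2 hPsupp
  have hHint : Integrable H P := by
    refine ⟨hHsm.aestronglyMeasurable, HasFiniteIntegral.of_bounded (C := Λmax) ?_⟩
    filter_upwards [hae] with x hx
    simpa [Real.norm_eq_abs] using hHle x hx
  -- integrability w.r.t. diracs
  have hIdirac : ∀ p : ℝ, Integrable H (Measure.dirac p) := by
    intro p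
    refine ⟨hHsm.aestronglyMeasurable, ?_⟩
    rw [HasFiniteIntegral, lintegral_dirac]
    exact ENNReal.coe_lt_top
  -- cells
  set C : ℕ → Set ℝ := fun i => Set.Ioc (A i) (A (i + 1)) with hC
  set CL : Set ℝ := Set.Ioc (A N) b with hCL
  have hCmeas : ∀ i, MeasurableSet (C i) := fun i => measurableSet_Ioc
  have hCLmeas : MeasurableSet CL := measurableSet_Ioc
  have hpt : ∀ i : ℕ, a + ((i : ℝ) + 1) * Δ = A (i + 1) := by
    intro i; simp only [hA]; push_cast; ring
  have hΔA : ∀ i : ℕ, A (i + 1) - A i = Δ := by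
    intro i; simp only [hA]; push_cast; ring
  -- integral with respect to the quantized measure
  have hquant : ∫ x, H x ∂(quantMeasure P a b Δ)
      = (P {a}).toReal * H a + (∑ i ∈ Finset.range N, (P (C i)).toReal * H (A (i + 1)))
        + (P CL).toReal * H b := by
    unfold quantMeasure
    have I0 : Integrable H (P {a} • Measure.dirac a) :=
      (hIdirac a).smul_measure (measure_ne_top P _)
    have Is : Integrable H (∑ i ∈ Finset.range (Nat.floor ((b - a) / Δ)),
        P (Set.Ioc (a + (i : ℝ) * Δ) (a + ((i : ℝ) + 1) * Δ)) •
          Measure.dirac (a + ((i : ℝ) + 1) * Δ)) :=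
      integrable_finset_sum_measure.2 fun i _ => (hIdirac _).smul_measure (measure_ne_top P _)
    have IL : Integrable H (P (Set.Ioc (a + (Nat.floor ((b - a) / Δ) : ℝ) * Δ) b) •
        Measure.dirac b) := (hIdirac b).smul_measure (measure_ne_top P _)
    rw [integral_add_measure (I0.add_measure Is) IL, integral_add_measure I0 Is,
      integral_finset_sum_measure (fun i _ => (hIdirac _).smul_measure (measure_ne_top P _))]
    simp only [integral_smul_measure, integral_dirac, smul_eq_mul, hpt, ← hN, hC, hCL, hA]
  -- disjointness of the cells
  have hdisj : (↑(Finset.range N) : Set ℕ).Pairwise (Function.onFun Disjoint C) := by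
    intro i _ j _ hij
    rcases hij.lt_or_gt with h | h
    · refine Set.Ioc_disjoint_Ioc.2 ?_
      calc min (A (i + 1)) (A (j + 1)) ≤ A (i + 1) := min_le_left _ _
        _ ≤ A j := hAmono _ _ h
        _ ≤ max (A i) (A j) := le_max_right _ _
    · refine Set.Ioc_disjoint_Ioc.2 ?_
      calc min (A (i + 1)) (A (j + 1)) ≤ A (j + 1) := min_le_right _ _
        _ ≤ A i := hAmono _ _ h
        _ ≤ max (A i) (A j) := le_max_left _ _
  have hUnion : ∀ n : ℕ, Set.Ioc a (A n) = ⋃ i ∈ Finset.range n, C i := by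
    intro n
    induction n with
    | zero => simp [hA0]
    | succ n ih =>
      rw [Finset.range_add_one, Finset.set_biUnion_insert, ← ih, Set.union_comm]
      exact (Set.Ioc_union_Ioc_eq_Ioc (hAa n) (hAmono n (n + 1) (Nat.le_succ n))).symm
  -- decomposition of the integral with respect to P
  have hdecomp : ∀ f : ℝ → ℝ, Integrable f P →
      ∫ x, f x ∂P = (∫ x in {a}, f x ∂P)
        + (∑ i ∈ Finset.range N, ∫ x in C i, f x ∂P) + ∫ x in CL, f x ∂P := by
    intro f hf
    have h1 : ∫ x, f x ∂P = ∫ x in Set.Icc a b, f x ∂P := by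
      rw [← integral_add_compl measurableSet_Icc hf]
      have h0 : P.restrict (Set.Icc a b)ᶜ = 0 := Measure.restrict_eq_zero.2 hPsupp
      rw [h0, integral_zero_measure, add_zero]
    have h2 : Set.Icc a b = {a} ∪ Set.Ioc a b := by
      rw [← Set.Ioc_insert_left hab.le, Set.insert_eq]
    have h3 : Set.Ioc a b = Set.Ioc a (A N) ∪ CL :=
      (Set.Ioc_union_Ioc_eq_Ioc (hAa N) hANb).symm
    rw [h1, h2, setIntegral_union (Set.disjoint_singleton_left.2 (by simp)) measurableSet_Ioc
        hf.integrableOn hf.integrableOn,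
      h3, setIntegral_union (Set.Ioc_disjoint_Ioc_of_le le_rfl) hCLmeas hf.integrableOn hf.integrableOn,
      hUnion N, integral_biUnion_finset _ (fun i _ => hCmeas i) hdisj
        (fun i _ => hf.integrableOn), add_assoc]
  -- the masses sum to one
  have hmass : (P {a}).toReal + (∑ i ∈ Finset.range N, (P (C i)).toReal) + (P CL).toReal = 1 := by
    have h1 := hdecomp (fun _ => (1 : ℝ)) (integrable_const 1)
    simp only [setIntegral_const, smul_eq_mul, mul_one, integral_const, measure_univ,
      measureReal_def, Measure.restrict_apply_univ, ENNReal.toReal_one] at h1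
    linarith
  -- bound for a single bracket
  have hbr : ∀ s : Set ℝ, MeasurableSet s → ∀ p ∈ Set.Icc a b,
      (∀ x ∈ s, x ∈ Set.Icc a b ∧ |p - x| ≤ Δ) →
      |(P s).toReal * H p - ∫ x in s, H x ∂P| ≤ (P s).toReal * B := by
    intro s hs p hp hsub
    have h1 : (P s).toReal * H p = ∫ _ in s, H p ∂P := by
      rw [setIntegral_const, smul_eq_mul, measureReal_def]
    rw [h1, ← integral_sub (integrableOn_const (C := H p) (measure_ne_top P s))
      hHint.integrableOn]
    have hb' : ∀ᵐ x ∂P, x ∈ s → ‖H p - H x‖ ≤ B :=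
      Filter.Eventually.of_forall fun x hx => by
        simpa [Real.norm_eq_abs] using hHdiff p hp x (hsub x hx).1 (hsub x hx).2
    have h2 := norm_setIntegral_le_of_norm_le_const_ae' (measure_lt_top P s) hb'
    rw [Real.norm_eq_abs, measureReal_def] at h2
    linarith [h2, mul_comm B (P s).toReal]
  -- assembling the difference
  have hQ : ∫ x, H x ∂(quantMeasure P a b Δ) - ∫ x, H x ∂P
      = ((P {a}).toReal * H a - ∫ x in {a}, H x ∂P)
        + (∑ i ∈ Finset.range N, ((P (C i)).toReal * H (A (i + 1)) - ∫ x in C i, H x ∂P))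
        + ((P CL).toReal * H b - ∫ x in CL, H x ∂P) := by
    rw [hquant, hdecomp H hHint, Finset.sum_sub_distrib]
    ring
  have hfinal : |∫ x, H x ∂(quantMeasure P a b Δ) - ∫ x, H x ∂P| ≤ B := by
    calc |∫ x, H x ∂(quantMeasure P a b Δ) - ∫ x, H x ∂P|
        ≤ (P {a}).toReal * B + (∑ i ∈ Finset.range N, (P (C i)).toReal * B)
          + (P CL).toReal * B := by
          rw [hQ]
          refine le_trans (abs_add_le _ _) (add_le_add (le_trans (abs_add_le _ _)
            (add_le_add ?_ ?_)) ?_)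
          · refine hbr {a} (measurableSet_singleton a) a ha fun x hx => ?_
            rw [Set.mem_singleton_iff] at hx
            subst hx
            exact ⟨ha, by simpa using hΔ.le⟩
          · refine le_trans (Finset.abs_sum_le_sum_abs _ _) (Finset.sum_le_sum fun i hi => ?_)
            have hiN : i + 1 ≤ N := Finset.mem_range.1 hi
            refine hbr (C i) (hCmeas i) (A (i + 1)) (hAmem _ hiN) fun x hx => ?_
            have hx1 : A i < x := hx.1
            have hx2 : x ≤ A (i + 1) := hx.2
            have hd := hΔA i
            constructor
            · exact ⟨le_trans (hAa i) hx1.le, le_trans hx2 (hAmem _ hiN).2⟩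
            · rw [abs_le]; constructor <;> linarith
          · refine hbr CL hCLmeas b hb fun x hx => ?_
            have hx1 : A N < x := hx.1
            have hx2 : x ≤ b := hx.2
            constructor
            · exact ⟨le_trans (hAa N) hx1.le, hx2⟩
            · rw [abs_le]; constructor <;> linarith
      _ = B := by rw [← Finset.sum_mul, ← add_mul, ← add_mul, hmass, one_mul]
  calc |(∫ x, H x ∂(quantMeasure P a b Δ)) - ∫ x, H x ∂P| ≤ B := hfinal
    _ ≤ ξ * Λmax + lam * (1 + ξ) := by
      rw [hB]
      nlinarith [mul_nonneg hlam0 hξ0]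
end

section
/- Let (f_x)_{x∈[a,b]} be a channel on [a,b] such that sup_{y∈ℝ} ( Lip(x ↦ f_x(y)) + sup_{x∈[a,b]} f_x(y) ) < ∞, where Lip(x ↦ f_x(y)) = sup_{x≠z} |f_x(y) − f_z(y)|/|x − z|. If (P_n) is a sequence of Borel probability measures on [a,b] converging weakly to a Borel probability measure P, then the induced channel output densities converge in L¹: ∫_ℝ | ∫_{[a,b]} f_x(y) dP_n(x) − ∫_{[a,b]} f_x(y) dP(x) | dy → 0 as n → ∞. -/
open MeasureTheory Filter

open scoped ENNReal in
-- helper: the output density is integrable, nonneg, integrates to 1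
lemma channel_output_basic
    (a b : ℝ) (hab : a ≤ b) (F : ℝ → ℝ → ℝ)
    (hFmeas : Measurable (Function.uncurry F))
    (hFnn : ∀ x ∈ Set.Icc a b, ∀ y : ℝ, 0 ≤ F x y)
    (hFprob : ∀ x ∈ Set.Icc a b, ∫ y : ℝ, F x y = 1)
    (M : ℝ)
    (hFbdd : ∀ y : ℝ, ∀ x ∈ Set.Icc a b, F x y ≤ M)
    (Q : Measure ℝ) [IsProbabilityMeasure Q] (hQ : Q (Set.Icc a b)ᶜ = 0) :
    Integrable (fun y => ∫ x, F x y ∂Q) volume ∧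
      (∫ y : ℝ, ∫ x, F x y ∂Q) = 1 ∧ ∀ y, 0 ≤ ∫ x, F x y ∂Q := by
  have hae : ∀ᵐ x ∂Q, x ∈ Set.Icc a b := by
    rw [ae_iff]; exact hQ
  have hsec : ∀ y, Measurable fun x => F x y := fun y => hFmeas.of_uncurry_right
  -- sections in y are integrable
  have hFint : ∀ x ∈ Set.Icc a b, Integrable (F x) volume := by
    intro x hx
    by_contra h
    have := hFprob x hx
    rw [integral_undef h] at this
    norm_num at this
  set g : ℝ → ℝ≥0∞ := fun y => ∫⁻ x, ENNReal.ofReal (F x y) ∂Q with hg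
  have hgmeas : Measurable g := by
    apply Measurable.lintegral_prod_right'
      (f := fun p : ℝ × ℝ => ENNReal.ofReal (F p.2 p.1))
    exact (hFmeas.comp measurable_swap).ennreal_ofReal
  have hglt : ∀ y, g y ≤ ENNReal.ofReal M := by
    intro y
    calc g y ≤ ∫⁻ _, ENNReal.ofReal M ∂Q := by
          apply lintegral_mono_ae
          filter_upwards [hae] with x hx
          exact ENNReal.ofReal_le_ofReal (hFbdd y x hx)
      _ = ENNReal.ofReal M := by simp
  have hrepr : ∀ y, (∫ x, F x y ∂Q) = (g y).toReal := by
    intro y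
    rw [integral_eq_lintegral_of_nonneg_ae]
    · filter_upwards [hae] with x hx using hFnn x hx y
    · exact (hsec y).aestronglyMeasurable
  have hswap : (∫⁻ y, g y) = 1 := by
    have h1 : (∫⁻ y, ∫⁻ x, ENNReal.ofReal (F x y) ∂Q)
        = ∫⁻ x, (∫⁻ y, ENNReal.ofReal (F x y)) ∂Q :=
      (lintegral_lintegral_swap (μ := Q) (ν := (volume : Measure ℝ))
        (f := fun x y => ENNReal.ofReal (F x y))
        (hFmeas.ennreal_ofReal.aemeasurable)).symm
    have h2 : ∀ᵐ x ∂Q, (∫⁻ y, ENNReal.ofReal (F x y)) = 1 := by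
      filter_upwards [hae] with x hx
      rw [← ofReal_integral_eq_lintegral_ofReal (hFint x hx)
        (Eventually.of_forall fun y => hFnn x hx y), hFprob x hx]
      simp
    calc (∫⁻ y, g y) = ∫⁻ x, (∫⁻ y, ENNReal.ofReal (F x y)) ∂Q := h1
      _ = ∫⁻ _, 1 ∂Q := lintegral_congr_ae h2
      _ = 1 := by simp
  have hnn : ∀ y, 0 ≤ ∫ x, F x y ∂Q := fun y => (hrepr y) ▸ ENNReal.toReal_nonneg
  have hofReal : ∀ y, ENNReal.ofReal ((fun y => ∫ x, F x y ∂Q) y) = g y := by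
    intro y
    show ENNReal.ofReal (∫ x, F x y ∂Q) = g y
    rw [hrepr y, ENNReal.ofReal_toReal]
    exact ((hglt y).trans_lt ENNReal.ofReal_lt_top).ne
  have hmeas' : AEStronglyMeasurable (fun y => ∫ x, F x y ∂Q) volume := by
    have h := hgmeas.ennreal_toReal
    have heq : (fun y => ∫ x, F x y ∂Q) = fun y => (g y).toReal := funext hrepr
    rw [heq]; exact h.aestronglyMeasurable
  have hint : Integrable (fun y => ∫ x, F x y ∂Q) volume := by
    refine ⟨hmeas', ?_⟩
    rw [hasFiniteIntegral_iff_ofReal (Eventually.of_forall hnn)]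
    simp_rw [hofReal]
    rw [hswap]; norm_num
  refine ⟨hint, ?_, hnn⟩
  rw [integral_eq_lintegral_of_nonneg_ae (Eventually.of_forall hnn) hmeas']
  simp_rw [hofReal]
  rw [hswap]; simp

/-- Weak-to-L¹ continuity of the channel output map: for a channel
whose densities are uniformly bounded and uniformly Lipschitz in the input symbol,
weak convergence `P_n ⇒ P` of input distributions implies L¹ convergence of the induced
output densities `T(P_n)(y) = ∫ f_x(y) dP_n(x)`. -/
theorem channel_output_L1_continuity
    (a b : ℝ) (hab : a < b)
    -- the channel
    (F : ℝ → ℝ → ℝ)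
    (hFmeas : Measurable (Function.uncurry F))
    (hFnn : ∀ x ∈ Set.Icc a b, ∀ y : ℝ, 0 ≤ F x y)
    (hFprob : ∀ x ∈ Set.Icc a b, ∫ y : ℝ, F x y = 1)
    -- uniform boundedness of `Lip(x ↦ f_x(y)) + sup_x f_x(y)` over `y`
    (M : ℝ)
    (hFlip : ∀ y : ℝ, ∀ x ∈ Set.Icc a b, ∀ z ∈ Set.Icc a b,
      |F x y - F z y| ≤ M * |x - z|)
    (hFbdd : ∀ y : ℝ, ∀ x ∈ Set.Icc a b, F x y ≤ M)
    -- the input distributions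
    (P : ℕ → Measure ℝ) (Plim : Measure ℝ)
    [∀ n, IsProbabilityMeasure (P n)] [IsProbabilityMeasure Plim]
    (hPsupp : ∀ n, P n (Set.Icc a b)ᶜ = 0) (hPlimsupp : Plim (Set.Icc a b)ᶜ = 0)
    -- weak convergence `P n ⇒ Plim`
    (hweak : ∀ f : BoundedContinuousFunction ℝ ℝ,
      Tendsto (fun n => ∫ x, f x ∂(P n)) atTop (nhds (∫ x, f x ∂Plim))) :
    Tendsto (fun n => ∫ y : ℝ, |(∫ x, F x y ∂(P n)) - ∫ x, F x y ∂Plim|)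
      atTop (nhds 0) := by
  have habne : a ∈ Set.Icc a b := ⟨le_refl a, hab.le⟩
  set π : ℝ → ℝ := fun x => (Set.projIcc a b hab.le x : ℝ) with hπdef
  have hπmem : ∀ x, π x ∈ Set.Icc a b := fun x => (Set.projIcc a b hab.le x).2
  have hπeq : ∀ x ∈ Set.Icc a b, π x = x := fun x hx => by
    simp only [hπdef, Set.projIcc_of_mem hab.le hx]
  -- bounded continuous extension of `F · y`
  have hφex : ∀ y : ℝ, ∃ φ : BoundedContinuousFunction ℝ ℝ, ∀ x, φ x = F (π x) y := by
    intro y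
    have hlipIcc : LipschitzWith M.toNNReal (fun u : Set.Icc a b => F u y) := by
      apply LipschitzWith.of_dist_le_mul
      intro u v
      rw [Real.dist_eq, Subtype.dist_eq, Real.dist_eq]
      calc |F u y - F v y| ≤ M * |(u:ℝ) - v| := hFlip y u u.2 v v.2
        _ ≤ (M.toNNReal : ℝ) * |(u:ℝ) - v| :=
            mul_le_mul_of_nonneg_right (Real.le_coe_toNNReal M) (abs_nonneg _)
    have hlip : LipschitzWith (M.toNNReal * 1) (fun x : ℝ => F (π x) y) :=
      hlipIcc.comp (LipschitzWith.projIcc hab.le)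
    refine ⟨BoundedContinuousFunction.mkOfBound ⟨_, hlip.continuous⟩ M ?_, fun x => rfl⟩
    intro x z
    rw [ContinuousMap.coe_mk, Real.dist_eq]
    have h1 := hFnn _ (hπmem x) y
    have h2 := hFnn _ (hπmem z) y
    have h3 := hFbdd y _ (hπmem x)
    have h4 := hFbdd y _ (hπmem z)
    rw [abs_sub_le_iff]
    constructor <;> linarith
  choose φ hφ using hφex
  -- integral equality on supported measures
  have hint_eq : ∀ (Q : Measure ℝ), Q (Set.Icc a b)ᶜ = 0 → ∀ y,
      ∫ x, (φ y) x ∂Q = ∫ x, F x y ∂Q := by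
    intro Q hQ y
    refine integral_congr_ae ?_
    have hae : ∀ᵐ x ∂Q, x ∈ Set.Icc a b := by rw [ae_iff]; exact hQ
    filter_upwards [hae] with x hx
    rw [hφ y x, hπeq x hx]
  -- pointwise convergence of output densities
  have hpt : ∀ y : ℝ, Tendsto (fun n => ∫ x, F x y ∂(P n)) atTop
      (nhds (∫ x, F x y ∂Plim)) := by
    intro y
    have h := hweak (φ y)
    have h1 : (fun n => ∫ x, (φ y) x ∂(P n)) = fun n => ∫ x, F x y ∂(P n) :=
      funext fun n => hint_eq _ (hPsupp n) y
    rw [h1, hint_eq _ hPlimsupp y] at h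
    exact h
  -- basic facts about output densities
  obtain ⟨hHint, hHone, hHnn⟩ := channel_output_basic a b hab.le F hFmeas hFnn hFprob M
    hFbdd Plim hPlimsupp
  have hG := fun n => channel_output_basic a b hab.le F hFmeas hFnn hFprob M
    hFbdd (P n) (hPsupp n)
  -- key identity:  ∫ |Gₙ - H| = 2 ∫ max (H - Gₙ) 0
  have hkey : ∀ n, (∫ y : ℝ, |(∫ x, F x y ∂(P n)) - ∫ x, F x y ∂Plim|)
      = 2 * ∫ y : ℝ, max ((∫ x, F x y ∂Plim) - ∫ x, F x y ∂(P n)) 0 := by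
    intro n
    obtain ⟨hGint, hGone, hGnn⟩ := hG n
    have hmax_int : Integrable
        (fun y => max ((∫ x, F x y ∂Plim) - ∫ x, F x y ∂(P n)) 0) volume :=
      (hHint.sub hGint).sup (integrable_zero _ _ _)
    have hid : (fun y : ℝ => |(∫ x, F x y ∂(P n)) - ∫ x, F x y ∂Plim|)
        = fun y : ℝ => ((∫ x, F x y ∂(P n)) - ∫ x, F x y ∂Plim)
          + 2 * max ((∫ x, F x y ∂Plim) - ∫ x, F x y ∂(P n)) 0 := by
      funext y
      rcases le_total (∫ x, F x y ∂Plim) (∫ x, F x y ∂(P n)) with h | h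
      · rw [abs_of_nonneg (by linarith), max_eq_right (by linarith)]; ring
      · rw [abs_of_nonpos (by linarith), max_eq_left (by linarith)]; ring
    have hsub : Integrable
        (fun y : ℝ => (∫ x, F x y ∂(P n)) - ∫ x, F x y ∂Plim) volume :=
      hGint.sub hHint
    rw [hid, integral_add hsub (hmax_int.const_mul 2),
        integral_sub hGint hHint, hGone, hHone, integral_const_mul]
    ring
  -- dominated convergence
  have hdct : Tendsto
      (fun n => ∫ y : ℝ, max ((∫ x, F x y ∂Plim) - ∫ x, F x y ∂(P n)) 0)
      atTop (nhds 0) := by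
    have hmeas : ∀ n, AEStronglyMeasurable
        (fun y : ℝ => max ((∫ x, F x y ∂Plim) - ∫ x, F x y ∂(P n)) 0) volume := by
      intro n
      have h : Integrable
          (fun y : ℝ => max ((∫ x, F x y ∂Plim) - ∫ x, F x y ∂(P n)) 0) volume :=
        (hHint.sub (hG n).1).sup (integrable_zero _ _ _)
      exact h.aestronglyMeasurable
    have hbound : ∀ n, ∀ᵐ y : ℝ,
        ‖max ((∫ x, F x y ∂Plim) - ∫ x, F x y ∂(P n)) 0‖ ≤ ∫ x, F x y ∂Plim := by
      intro n
      filter_upwards with y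
      rw [Real.norm_eq_abs, abs_of_nonneg (le_max_right _ _)]
      exact max_le (by have := (hG n).2.2 y; linarith) (hHnn y)
    have hlim : ∀ᵐ y : ℝ, Tendsto
        (fun n => max ((∫ x, F x y ∂Plim) - ∫ x, F x y ∂(P n)) 0)
        atTop (nhds ((fun _ : ℝ => (0:ℝ)) y)) := by
      filter_upwards with y
      have h1 : Tendsto (fun n => (∫ x, F x y ∂Plim) - ∫ x, F x y ∂(P n))
          atTop (nhds 0) := by
        simpa using (hpt y).const_sub (∫ x, F x y ∂Plim)
      simpa using h1.max (tendsto_const_nhds (x := (0:ℝ)))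
    have h := tendsto_integral_of_dominated_convergence (μ := (volume : Measure ℝ))
      (F := fun n (y : ℝ) => max ((∫ x, F x y ∂Plim) - ∫ x, F x y ∂(P n)) 0)
      (f := fun _ : ℝ => (0:ℝ)) (fun y => ∫ x, F x y ∂Plim) hmeas hHint hbound hlim
    simpa using h
  have heq : (fun n => ∫ y : ℝ, |(∫ x, F x y ∂(P n)) - ∫ x, F x y ∂Plim|)
      = fun n => 2 * ∫ y : ℝ, max ((∫ x, F x y ∂Plim) - ∫ x, F x y ∂(P n)) 0 :=
    funext hkey
  rw [heq]
  simpa using hdct.const_mul 2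
end

section
/- Let (Ω, F, μ) be a probability space with X : Ω → [a,b] a random variable taking values in a compact interval, and let Λ : [a,b] × [a,b] → [0,∞) be bounded and continuous. Define the Bayes envelope U(ν) = inf_{x̂ ∈ [a,b]} ∫_{[a,b]} Λ(x, x̂) dν(x) for Borel probability measures ν on [a,b]. Let Y : Ω → ℝ^m and Z : Ω → ℝ^p be random vectors, and let μ_{X|Y} and μ_{X|(Y,Z)} denote regular conditional distributions of X given Y and given the pair (Y,Z), respectively. Then E[ U(μ_{X|(Y,Z)}) ] ≤ E[ U(μ_{X|Y}) ]: conditioning on the additional observation Z does not increase the expected Bayes envelope. -/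
open MeasureTheory ProbabilityTheory

/-- The Bayes envelope `U(ν) = inf_{x̂ ∈ [a,b]} ∫ Λ(x, x̂) dν(x)`. -/
noncomputable def bayesEnvelope (a b : ℝ) (Λ : ℝ → ℝ → ℝ) (ν : Measure ℝ) : ℝ :=
  sInf {r : ℝ | ∃ xhat ∈ Set.Icc a b, r = ∫ x, Λ x xhat ∂ν}

lemma map_pair_eq_compProd' {Ω W : Type*} [MeasurableSpace Ω] [MeasurableSpace W]
    (μ : Measure Ω) [IsProbabilityMeasure μ] {V : Ω → W} (hV : Measurable V)
    {X : Ω → ℝ} (hX : Measurable X) (κ : Kernel W ℝ) [IsMarkovKernel κ]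
    (hκ : ∀ B : Set ℝ, MeasurableSet B → ∀ A : Set W, MeasurableSet A →
      μ {ω | X ω ∈ B ∧ V ω ∈ A} = ∫⁻ w in A, κ w B ∂(μ.map V)) :
    μ.map (fun ω => (V ω, X ω)) = (μ.map V) ⊗ₘ κ := by
  haveI : IsProbabilityMeasure (μ.map V) := Measure.isProbabilityMeasure_map hV.aemeasurable
  haveI : IsProbabilityMeasure (μ.map (fun ω => (V ω, X ω))) :=
    Measure.isProbabilityMeasure_map (hV.prodMk hX).aemeasurable
  refine ext_of_generate_finite _ generateFrom_prod.symm isPiSystem_prod ?_ ?_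
  · rintro s ⟨A, hA, B, hB, rfl⟩
    simp only [Set.mem_setOf_eq] at hA hB
    rw [Measure.map_apply (hV.prodMk hX) (hA.prod hB), Measure.compProd_apply_prod hA hB]
    have h2 : (fun ω => (V ω, X ω)) ⁻¹' (A ×ˢ B) = {ω | X ω ∈ B ∧ V ω ∈ A} := by
      ext ω; simp [Set.mem_prod, and_comm]
    rw [h2, hκ B hB A hA]
  · simp

lemma integral_comp_eq_integral_kernel' {Ω W : Type*} [MeasurableSpace Ω] [MeasurableSpace W]
    (μ : Measure Ω) [IsProbabilityMeasure μ] {V : Ω → W} (hV : Measurable V)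
    {X : Ω → ℝ} (hX : Measurable X) (κ : Kernel W ℝ) [IsMarkovKernel κ]
    (hκmap : μ.map (fun ω => (V ω, X ω)) = (μ.map V) ⊗ₘ κ)
    {f : W × ℝ → ℝ} (hf : Measurable f) (C : ℝ) (hbdd : ∀ q, |f q| ≤ C) :
    ∫ ω, f (V ω, X ω) ∂μ = ∫ ω, ∫ x, f (V ω, x) ∂(κ (V ω)) ∂μ := by
  haveI : IsProbabilityMeasure (μ.map V) := Measure.isProbabilityMeasure_map hV.aemeasurable
  haveI : IsProbabilityMeasure ((μ.map V) ⊗ₘ κ) := by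
    rw [← hκmap]; exact Measure.isProbabilityMeasure_map (hV.prodMk hX).aemeasurable
  have hint : Integrable f ((μ.map V) ⊗ₘ κ) := by
    refine (integrable_const C).mono' hf.aestronglyMeasurable ?_
    exact Filter.Eventually.of_forall fun q => by simpa [Real.norm_eq_abs] using hbdd q
  have hsm : StronglyMeasurable fun w => ∫ x, f (w, x) ∂(κ w) :=
    StronglyMeasurable.integral_kernel_prod_right
      (f := fun w x => f (w, x)) (by exact hf.stronglyMeasurable)
  calc ∫ ω, f (V ω, X ω) ∂μ
      = ∫ q, f q ∂(μ.map (fun ω => (V ω, X ω))) :=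
        (integral_map (hV.prodMk hX).aemeasurable hf.aestronglyMeasurable).symm
    _ = ∫ q, f q ∂((μ.map V) ⊗ₘ κ) := by rw [hκmap]
    _ = ∫ w, ∫ x, f (w, x) ∂(κ w) ∂(μ.map V) := Measure.integral_compProd hint
    _ = ∫ ω, ∫ x, f (V ω, x) ∂(κ (V ω)) ∂μ :=
        integral_map hV.aemeasurable hsm.aestronglyMeasurable

/-- Extra observations do not increase the expected Bayes envelope:
if `κ₁` is a regular conditional distribution of `X` given `Y` and `κ₂` one of `X`
given the pair `(Y, Z)`, then `E[U(μ_{X|(Y,Z)})] ≤ E[U(μ_{X|Y})]`. -/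
theorem expected_bayesEnvelope_anti_conditioning
    (a b : ℝ) (hab : a < b)
    -- the loss function: bounded and continuous
    (Λ : ℝ → ℝ → ℝ)
    (hΛcont : ContinuousOn (Function.uncurry Λ) (Set.Icc a b ×ˢ Set.Icc a b))
    (hΛnn : ∀ x ∈ Set.Icc a b, ∀ x' ∈ Set.Icc a b, 0 ≤ Λ x x')
    (C : ℝ) (hΛbdd : ∀ x ∈ Set.Icc a b, ∀ x' ∈ Set.Icc a b, Λ x x' ≤ C)
    -- the probability space and the random variables
    (Ω : Type*) [MeasurableSpace Ω] (μ : Measure Ω) [IsProbabilityMeasure μ]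
    (m p : ℕ)
    (X : Ω → ℝ) (hXmeas : Measurable X) (hXrange : ∀ ω, X ω ∈ Set.Icc a b)
    (Y : Ω → Fin m → ℝ) (hYmeas : Measurable Y)
    (Z : Ω → Fin p → ℝ) (hZmeas : Measurable Z)
    -- a regular conditional distribution of `X` given `Y`
    (κ₁ : Kernel (Fin m → ℝ) ℝ) [IsMarkovKernel κ₁]
    (hκ₁ : ∀ B : Set ℝ, MeasurableSet B → ∀ A : Set (Fin m → ℝ), MeasurableSet A →
      μ {ω | X ω ∈ B ∧ Y ω ∈ A} = ∫⁻ w in A, κ₁ w B ∂(μ.map Y))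
    -- a regular conditional distribution of `X` given `(Y, Z)`
    (κ₂ : Kernel ((Fin m → ℝ) × (Fin p → ℝ)) ℝ) [IsMarkovKernel κ₂]
    (hκ₂ : ∀ B : Set ℝ, MeasurableSet B →
      ∀ A : Set ((Fin m → ℝ) × (Fin p → ℝ)), MeasurableSet A →
      μ {ω | X ω ∈ B ∧ (Y ω, Z ω) ∈ A}
        = ∫⁻ w in A, κ₂ w B ∂(μ.map (fun ω => (Y ω, Z ω)))) :
    ∫ ω, bayesEnvelope a b Λ (κ₂ (Y ω, Z ω)) ∂μ
      ≤ ∫ ω, bayesEnvelope a b Λ (κ₁ (Y ω)) ∂μ := by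
  classical
  set I : Set ℝ := Set.Icc a b with hI
  have haI : a ∈ I := Set.left_mem_Icc.2 hab.le
  have hC0 : 0 ≤ C := le_trans (hΛnn a haI a haI) (hΛbdd a haI a haI)
  -- clamping map
  set c : ℝ → ℝ := fun t => max a (min t b) with hc
  have hcmem : ∀ t, c t ∈ I := fun t =>
    ⟨le_max_left _ _, max_le hab.le (min_le_right _ _)⟩
  have hccont : Continuous c := continuous_const.max (continuous_id.min continuous_const)
  have hcid : ∀ t ∈ I, c t = t := by
    intro t ht
    simp only [hc]
    rw [min_eq_left ht.2, max_eq_right ht.1]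
  -- extended loss
  set Λ' : ℝ → ℝ → ℝ := fun x y => Λ (c x) (c y) with hΛ'
  have hΛ'cont : Continuous (fun q : ℝ × ℝ => Λ' q.1 q.2) := by
    have : Continuous fun q : ℝ × ℝ => (c q.1, c q.2) :=
      (hccont.comp continuous_fst).prodMk (hccont.comp continuous_snd)
    exact hΛcont.comp_continuous this fun q => ⟨hcmem _, hcmem _⟩
  have hΛ'nn : ∀ x y, 0 ≤ Λ' x y := fun x y => hΛnn _ (hcmem x) _ (hcmem y)
  have hΛ'le : ∀ x y, Λ' x y ≤ C := fun x y => hΛbdd _ (hcmem x) _ (hcmem y)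
  have hΛ'abs : ∀ x y, |Λ' x y| ≤ C := fun x y => by
    rw [abs_of_nonneg (hΛ'nn x y)]; exact hΛ'le x y
  have hΛ'eq : ∀ x ∈ I, ∀ y ∈ I, Λ' x y = Λ x y := by
    intro x hx y hy; simp only [hΛ']; rw [hcid x hx, hcid y hy]
  -- the payoff function `G ν y = ∫ Λ' x y dν`
  set G : Measure ℝ → ℝ → ℝ := fun ν y => ∫ x, Λ' x y ∂ν with hG
  have hGnn : ∀ ν y, 0 ≤ G ν y := fun ν y => integral_nonneg fun x => hΛ'nn x y
  have hGle : ∀ (ν : Measure ℝ), IsProbabilityMeasure ν → ∀ y, G ν y ≤ C := by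
    intro ν hν y
    haveI := hν
    calc G ν y ≤ ∫ _x, C ∂ν := by
          refine integral_mono ?_ (integrable_const C) fun x => hΛ'le x y
          refine (integrable_const C).mono'
            ((hΛ'cont.comp (continuous_id.prodMk continuous_const)).aestronglyMeasurable) ?_
          exact Filter.Eventually.of_forall fun x => by
            simpa [Real.norm_eq_abs] using hΛ'abs x y
      _ = C := by simp
  have hGcont : ∀ (ν : Measure ℝ), IsProbabilityMeasure ν → Continuous (G ν) := by
    intro ν hν
    haveI := hν
    rw [continuous_iff_continuousAt]
    intro y₀
    refine continuousAt_of_dominated (bound := fun _ => C) ?_ ?_ (integrable_const C) ?_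
    · exact Filter.Eventually.of_forall fun y =>
        (hΛ'cont.comp (continuous_id.prodMk continuous_const)).aestronglyMeasurable
    · exact Filter.Eventually.of_forall fun y =>
        Filter.Eventually.of_forall fun x => by
          simpa [Real.norm_eq_abs] using hΛ'abs x y
    · exact Filter.Eventually.of_forall fun x =>
        (hΛ'cont.comp (continuous_const.prodMk continuous_id)).continuousAt
  -- dense sequence in I
  haveI : Nonempty ↥I := ⟨⟨a, haI⟩⟩
  set d : ℕ → ℝ := fun n => (TopologicalSpace.denseSeq ↥I n : ℝ) with hd
  have hdmem : ∀ n, d n ∈ I := fun n => (TopologicalSpace.denseSeq ↥I n).2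
  have hddense : ∀ y ∈ I, ∀ O : Set ℝ, IsOpen O → y ∈ O → ∃ n, d n ∈ O := by
    intro y hy O hO hyO
    have hdr := TopologicalSpace.denseRange_denseSeq ↥I
    obtain ⟨n, hn⟩ := hdr.exists_mem_open (hO.preimage continuous_subtype_val)
      ⟨⟨y, hy⟩, hyO⟩
    exact ⟨n, hn⟩
  -- key: on nice measures the Bayes envelope is a countable inf of `G`s
  have hbdd_range : ∀ ν : Measure ℝ, BddBelow (Set.range fun n => G ν (d n)) :=
    fun ν => ⟨0, by rintro r ⟨n, rfl⟩; exact hGnn ν (d n)⟩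
  have key1 : ∀ (ν : Measure ℝ), ν Iᶜ = 0 → ∀ y ∈ I,
      ∫ x, Λ x y ∂ν = G ν y := by
    intro ν hν y hy
    refine integral_congr_ae ?_
    have hae : ∀ᵐ x ∂ν, x ∈ I := by
      rw [ae_iff]
      exact hν
    exact hae.mono fun x hx => (hΛ'eq x hx y hy).symm
  have key2 : ∀ (ν : Measure ℝ), IsProbabilityMeasure ν → ∀ y ∈ I,
      (⨅ n, G ν (d n)) ≤ G ν y := by
    intro ν hν y hy
    refine le_of_forall_pos_le_add ?_
    intro δ hδ
    have hO : IsOpen {y' : ℝ | G ν y' < G ν y + δ} :=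
      isOpen_lt (hGcont ν hν) continuous_const
    obtain ⟨n, hn⟩ := hddense y hy _ hO (by simp [hδ])
    exact le_trans (ciInf_le (hbdd_range ν) n) hn.le
  have key3 : ∀ (ν : Measure ℝ), IsProbabilityMeasure ν → ν Iᶜ = 0 →
      bayesEnvelope a b Λ ν = ⨅ n, G ν (d n) := by
    intro ν hν hνI
    have hSbd : ∀ r ∈ {r : ℝ | ∃ xhat ∈ Set.Icc a b, r = ∫ x, Λ x xhat ∂ν}, 0 ≤ r := by
      rintro r ⟨y, hy, rfl⟩
      rw [key1 ν hνI y hy]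
      exact hGnn ν y
    refine le_antisymm ?_ ?_
    · refine le_ciInf fun n => csInf_le ⟨0, hSbd⟩ ?_
      exact ⟨d n, hdmem n, (key1 ν hνI (d n) (hdmem n)).symm⟩
    · refine le_csInf ⟨_, a, haI, rfl⟩ ?_
      rintro r ⟨y, hy, rfl⟩
      rw [key1 ν hνI y hy]
      exact key2 ν hν y hy
  -- kernels are a.e. supported on I
  have hIc : MeasurableSet Iᶜ := measurableSet_Icc.compl
  have hempty : ∀ A : Set Ω, {ω | X ω ∈ Iᶜ ∧ ω ∈ A} = ∅ := fun A => by
    ext ω; simp [hXrange ω]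
  have hsupp₂ : ∀ᵐ w ∂(μ.map fun ω => (Y ω, Z ω)), κ₂ w Iᶜ = 0 := by
    have h := hκ₂ Iᶜ hIc Set.univ MeasurableSet.univ
    rw [Measure.restrict_univ] at h
    have h0 : μ {ω | X ω ∈ Iᶜ ∧ (Y ω, Z ω) ∈ Set.univ} = 0 := by
      have : {ω | X ω ∈ Iᶜ ∧ (Y ω, Z ω) ∈ Set.univ} = ∅ := by
        ext ω; simp [hXrange ω]
      rw [this]; simp
    rw [h0] at h
    have := (lintegral_eq_zero_iff (κ₂.measurable_coe hIc)).1 h.symm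
    exact this
  have hsupp₁ : ∀ᵐ w ∂(μ.map Y), κ₁ w Iᶜ = 0 := by
    have h := hκ₁ Iᶜ hIc Set.univ MeasurableSet.univ
    rw [Measure.restrict_univ] at h
    have h0 : μ {ω | X ω ∈ Iᶜ ∧ Y ω ∈ Set.univ} = 0 := by
      have : {ω | X ω ∈ Iᶜ ∧ Y ω ∈ Set.univ} = ∅ := by
        ext ω; simp [hXrange ω]
      rw [this]; simp
    rw [h0] at h
    exact (lintegral_eq_zero_iff (κ₁.measurable_coe hIc)).1 h.symm
  have hYZmeas : Measurable fun ω => (Y ω, Z ω) := hYmeas.prodMk hZmeas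
  have hae₂ : ∀ᵐ ω ∂μ, κ₂ (Y ω, Z ω) Iᶜ = 0 :=
    ae_of_ae_map hYZmeas.aemeasurable hsupp₂
  have hae₁ : ∀ᵐ ω ∂μ, κ₁ (Y ω) Iᶜ = 0 :=
    ae_of_ae_map hYmeas.aemeasurable hsupp₁
  have hcongr₂ : ∀ᵐ ω ∂μ,
      bayesEnvelope a b Λ (κ₂ (Y ω, Z ω)) = ⨅ n, G (κ₂ (Y ω, Z ω)) (d n) :=
    hae₂.mono fun ω h => key3 _ inferInstance h
  have hcongr₁ : ∀ᵐ ω ∂μ,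
      bayesEnvelope a b Λ (κ₁ (Y ω)) = ⨅ n, G (κ₁ (Y ω)) (d n) :=
    hae₁.mono fun ω h => key3 _ inferInstance h
  rw [integral_congr_ae hcongr₂, integral_congr_ae hcongr₁]
  -- measurability of the G-functions and the infima
  have hGmeas₁ : ∀ y : ℝ, Measurable fun w => G (κ₁ w) y := fun y =>
    (StronglyMeasurable.integral_kernel_prod_right (κ := κ₁)
      (f := fun _w x => Λ' x y)
      ((hΛ'cont.comp (continuous_snd.prodMk continuous_const)).stronglyMeasurable)).measurable
  have hGmeas₂ : ∀ y : ℝ, Measurable fun w => G (κ₂ w) y := fun y =>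
    (StronglyMeasurable.integral_kernel_prod_right (κ := κ₂)
      (f := fun _w x => Λ' x y)
      ((hΛ'cont.comp (continuous_snd.prodMk continuous_const)).stronglyMeasurable)).measurable
  set F₁ : (Fin m → ℝ) → ℝ := fun w => ⨅ n, G (κ₁ w) (d n) with hF₁
  set F₂ : ((Fin m → ℝ) × (Fin p → ℝ)) → ℝ := fun w => ⨅ n, G (κ₂ w) (d n) with hF₂
  have hF₁meas : Measurable F₁ := Measurable.iInf fun n => hGmeas₁ (d n)
  have hF₂meas : Measurable F₂ := Measurable.iInf fun n => hGmeas₂ (d n)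
  have hF₁nn : ∀ w, 0 ≤ F₁ w := fun w => le_ciInf fun n => hGnn _ _
  have hF₂nn : ∀ w, 0 ≤ F₂ w := fun w => le_ciInf fun n => hGnn _ _
  have hF₁le : ∀ w, F₁ w ≤ C := fun w =>
    le_trans (ciInf_le (hbdd_range _) 0) (hGle _ inferInstance _)
  have hF₂le : ∀ w, F₂ w ≤ C := fun w =>
    le_trans (ciInf_le (hbdd_range _) 0) (hGle _ inferInstance _)
  have hint_of_bdd : ∀ {g : Ω → ℝ} (_ : Measurable g) (D : ℝ) (_ : ∀ ω, |g ω| ≤ D),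
      Integrable g μ := by
    intro g hg D hb
    refine (integrable_const D).mono' hg.aestronglyMeasurable ?_
    exact Filter.Eventually.of_forall fun ω => by simpa [Real.norm_eq_abs] using hb ω
  -- the ε-optimal measurable selection
  refine le_of_forall_pos_le_add ?_
  intro ε hε
  have hfind : ∀ w, ∃ n, G (κ₁ w) (d n) < F₁ w + ε := by
    intro w
    exact exists_lt_of_ciInf_lt (lt_add_of_pos_right _ hε)
  set N : (Fin m → ℝ) → ℕ := fun w => Nat.find (hfind w) with hN
  have hNmeas : Measurable N := by
    refine measurable_find hfind fun k => ?_
    exact measurableSet_lt (hGmeas₁ (d k)) (hF₁meas.add_const ε)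
  set xh : (Fin m → ℝ) → ℝ := fun w => d (N w) with hxh
  have hdm : Measurable d := measurable_from_top
  have hxhmeas : Measurable xh := hdm.comp hNmeas
  have hxhopt : ∀ w, G (κ₁ w) (xh w) < F₁ w + ε := fun w => Nat.find_spec (hfind w)
  -- disintegration identities
  have hmap₂ := map_pair_eq_compProd' μ hYZmeas hXmeas κ₂ hκ₂
  have hmap₁ := map_pair_eq_compProd' μ hYmeas hXmeas κ₁ hκ₁
  have hf₂meas : Measurable fun q : ((Fin m → ℝ) × (Fin p → ℝ)) × ℝ => Λ' q.2 (xh q.1.1) :=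
    hΛ'cont.measurable.comp
      (measurable_snd.prodMk (hxhmeas.comp (measurable_fst.comp measurable_fst)))
  have hf₁meas : Measurable fun q : (Fin m → ℝ) × ℝ => Λ' q.2 (xh q.1) :=
    hΛ'cont.measurable.comp (measurable_snd.prodMk (hxhmeas.comp measurable_fst))
  have E1 : ∫ ω, Λ' (X ω) (xh (Y ω)) ∂μ
      = ∫ ω, ∫ x, Λ' x (xh (Y ω)) ∂(κ₂ (Y ω, Z ω)) ∂μ :=
    integral_comp_eq_integral_kernel' μ hYZmeas hXmeas κ₂ hmap₂
      (f := fun q => Λ' q.2 (xh q.1.1)) hf₂meas C (fun q => hΛ'abs _ _)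
  have E2 : ∫ ω, Λ' (X ω) (xh (Y ω)) ∂μ
      = ∫ ω, G (κ₁ (Y ω)) (xh (Y ω)) ∂μ :=
    integral_comp_eq_integral_kernel' μ hYmeas hXmeas κ₁ hmap₁
      (f := fun q => Λ' q.2 (xh q.1)) hf₁meas C (fun q => hΛ'abs _ _)
  -- integrability facts
  have hintF₂ : Integrable (fun ω => F₂ (Y ω, Z ω)) μ :=
    hint_of_bdd (hF₂meas.comp hYZmeas) C fun ω =>
      abs_le.2 ⟨le_trans (neg_nonpos.2 hC0) (hF₂nn _), hF₂le _⟩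
  have hintF₁ : Integrable (fun ω => F₁ (Y ω)) μ :=
    hint_of_bdd (hF₁meas.comp hYmeas) C fun ω =>
      abs_le.2 ⟨le_trans (neg_nonpos.2 hC0) (hF₁nn _), hF₁le _⟩
  have hG₂meas : Measurable fun w : (Fin m → ℝ) × (Fin p → ℝ) => G (κ₂ w) (xh w.1) := by
    exact (StronglyMeasurable.integral_kernel_prod_right (κ := κ₂)
      (f := fun w x => Λ' x (xh w.1)) (by exact hf₂meas.stronglyMeasurable)).measurable
  have hG₁meas : Measurable fun w : Fin m → ℝ => G (κ₁ w) (xh w) := by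
    exact (StronglyMeasurable.integral_kernel_prod_right (κ := κ₁)
      (f := fun w x => Λ' x (xh w)) (by exact hf₁meas.stronglyMeasurable)).measurable
  have hintG₂ : Integrable (fun ω => G (κ₂ (Y ω, Z ω)) (xh (Y ω))) μ :=
    hint_of_bdd (hG₂meas.comp hYZmeas) C fun ω =>
      abs_le.2 ⟨le_trans (neg_nonpos.2 hC0) (hGnn _ _), hGle _ inferInstance _⟩
  have hintG₁ : Integrable (fun ω => G (κ₁ (Y ω)) (xh (Y ω))) μ :=
    hint_of_bdd (hG₁meas.comp hYmeas) C fun ω =>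
      abs_le.2 ⟨le_trans (neg_nonpos.2 hC0) (hGnn _ _), hGle _ inferInstance _⟩
  calc ∫ ω, F₂ (Y ω, Z ω) ∂μ
      ≤ ∫ ω, G (κ₂ (Y ω, Z ω)) (xh (Y ω)) ∂μ := by
        refine integral_mono hintF₂ hintG₂ fun ω => ?_
        exact ciInf_le (hbdd_range _) (N (Y ω))
    _ = ∫ ω, Λ' (X ω) (xh (Y ω)) ∂μ := E1.symm
    _ = ∫ ω, G (κ₁ (Y ω)) (xh (Y ω)) ∂μ := E2
    _ ≤ ∫ ω, (F₁ (Y ω) + ε) ∂μ :=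
        integral_mono hintG₁ (hintF₁.add (integrable_const ε))
          fun ω => (hxhopt (Y ω)).le
    _ = (∫ ω, F₁ (Y ω) ∂μ) + ε := by
        rw [integral_add hintF₁ (integrable_const ε), integral_const]
        simp
end
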